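/- arXiv:1301.2606 — 2 statements merged into one kernel-verified Lean document; each statement's English description precedes it below -/
import Mathlib

section
/- Let A be an affine invariant set mapping on 𝒦ₙ. Then there exists c > 0 such that c(K − g(K)) ⊆ A(K) − g(A(K)) for every K ∈ 𝒦ₙ. -/
open scoped Pointwise
open MeasureTheory

noncomputable section

/-- Euclidean space `ℝⁿ`. -/
abbrev EucSp (n : ℕ) := EuclideanSpace ℝ (Fin n)

/-- The space `𝒦ₙ` of convex bodies in `ℝⁿ`: compact convex sets with nonempty interior,
equipped (as a subtype of `ConvexBody`) with the Hausdorff metric. -/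
def Kn (n : ℕ) : Type :=
  {K : ConvexBody (EucSp n) // (interior (K : Set (EucSp n))).Nonempty}

noncomputable instance (n : ℕ) : MetricSpace (Kn n) :=
  Subtype.metricSpace

/-- The underlying set of a convex body in `𝒦ₙ`. -/
def Kn.toSet {n : ℕ} (K : Kn n) : Set (EucSp n) := (K.1 : Set (EucSp n))

/-- An affine equivalence of `ℝⁿ` as a homeomorphism. -/
def affEquivHomeo {n : ℕ} (T : EucSp n ≃ᵃ[ℝ] EucSp n) : EucSp n ≃ₜ EucSp n where
  toEquiv := T.toEquiv
  continuous_toFun := T.toAffineMap.continuous_of_finiteDimensional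
  continuous_invFun := T.symm.toAffineMap.continuous_of_finiteDimensional

/-- The image of a convex body under an invertible affine map, as a convex body. -/
def affImage {n : ℕ} (T : EucSp n ≃ᵃ[ℝ] EucSp n) (K : Kn n) : Kn n :=
  ⟨⟨(T : EucSp n → EucSp n) '' K.toSet,
    (K.1.convex.affine_image T.toAffineMap : Convex ℝ ((T : EucSp n → EucSp n) '' K.toSet)),
    K.1.isCompact.image (affEquivHomeo T).continuous,
    K.1.nonempty.image _⟩,
    by
      obtain ⟨x, hx⟩ := K.2
      exact ⟨T x, ((affEquivHomeo T).image_interior (K.1 : Set (EucSp n))) ▸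
        Set.mem_image_of_mem _ hx⟩⟩

/-- An affine invariant point: a continuous map `p : 𝒦ₙ → ℝⁿ` such that
`p (T K) = T (p K)` for every invertible affine map `T`. -/
def IsAffineInvariantPoint {n : ℕ} (p : Kn n → EucSp n) : Prop :=
  Continuous p ∧ ∀ (T : EucSp n ≃ᵃ[ℝ] EucSp n) (K : Kn n), p (affImage T K) = T (p K)

/-- An affine invariant set mapping: a continuous map `A : 𝒦ₙ → 𝒦ₙ` such that
`A (T K) = T (A K)` for every invertible affine map `T`. -/
def IsAffineInvariantSetMap {n : ℕ} (A : Kn n → Kn n) : Prop :=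
  Continuous A ∧ ∀ (T : EucSp n ≃ᵃ[ℝ] EucSp n) (K : Kn n), A (affImage T K) = affImage T (A K)

/-- The centroid `g(S) = (∫_S x dx) / vol(S)` of a set `S ⊆ ℝⁿ`. -/
def centroid {n : ℕ} (S : Set (EucSp n)) : EucSp n :=
  (volume S).toReal⁻¹ • ∫ x in S, x

/-- `𝔓ₙ(K) = {p(K) : p ∈ 𝔓ₙ}`. -/
def PnSet (n : ℕ) (K : Kn n) : Set (EucSp n) :=
  {x | ∃ p : Kn n → EucSp n, IsAffineInvariantPoint p ∧ p K = x}

end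
noncomputable section AuxDev
open Metric Set MeasureTheory
open scoped ENNReal NNReal
variable {n : ℕ}

lemma Kn.convex (K : Kn n) : Convex ℝ K.toSet := K.1.convex
lemma Kn.isCompact (K : Kn n) : IsCompact K.toSet := K.1.isCompact
lemma Kn.isClosed (K : Kn n) : IsClosed K.toSet := K.1.isCompact.isClosed
lemma Kn.nonempty (K : Kn n) : K.toSet.Nonempty := K.1.nonempty
lemma Kn.interior_nonempty (K : Kn n) : (interior K.toSet).Nonempty := K.2
lemma Kn.measurableSet (K : Kn n) : MeasurableSet K.toSet := K.isClosed.measurableSet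

lemma Kn.volume_pos (K : Kn n) : 0 < volume K.toSet := by
  obtain ⟨x, hx⟩ := K.2
  obtain ⟨ε, hε, hball⟩ := Metric.isOpen_iff.1 isOpen_interior x hx
  calc (0:ℝ≥0∞) < volume (Metric.ball x ε) := measure_ball_pos _ _ hε
    _ ≤ volume K.toSet := measure_mono (hball.trans interior_subset)

lemma Kn.volume_lt_top (K : Kn n) : volume K.toSet < ⊤ := K.isCompact.measure_lt_top

lemma Kn.volume_toReal_pos (K : Kn n) : 0 < (volume K.toSet).toReal :=
  ENNReal.toReal_pos K.volume_pos.ne' K.volume_lt_top.ne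

lemma Kn.integrableOn_id (K : Kn n) : IntegrableOn (fun x => x) K.toSet :=
  continuous_id.continuousOn.integrableOn_compact K.isCompact

lemma Kn.integrableOn_comp (K : Kn n) {F : Type*} [NormedAddCommGroup F] [NormedSpace ℝ F]
    (f : EucSp n → F) (hf : Continuous f) : IntegrableOn f K.toSet :=
  hf.continuousOn.integrableOn_compact K.isCompact

/-- The centroid of a convex body lies in its interior. -/
lemma Kn.centroid_mem_interior (K : Kn n) : centroid K.toSet ∈ interior K.toSet := by
  set C := K.toSet with hC
  set v : ℝ := (volume C).toReal with hv
  have hv0 : 0 < v := K.volume_toReal_pos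
  by_contra hg
  set g : EucSp n := centroid C with hgdef
  obtain ⟨f, hf⟩ := geometric_hahn_banach_open_point (K.convex.interior) isOpen_interior hg
  -- f a < f g for all a in interior C; deduce f x ≤ f g on C
  have hle : ∀ x ∈ C, f x ≤ f g := by
    intro x hx
    obtain ⟨y, hy⟩ := K.interior_nonempty
    have htend : Filter.Tendsto (fun t : ℝ => f ((1 - t) • x + t • y)) (nhdsWithin 0 (Set.Ioi 0))
        (nhds (f x)) := by
      have : Continuous (fun t : ℝ => f ((1 - t) • x + t • y)) := by fun_prop
      have h0 : f ((1 - (0:ℝ)) • x + (0:ℝ) • y) = f x := by norm_num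
      simpa [h0] using (this.tendsto 0).mono_left nhdsWithin_le_nhds
    refine le_of_tendsto htend ?_
    filter_upwards [self_mem_nhdsWithin, eventually_nhdsWithin_of_eventually_nhds
      (eventually_lt_nhds zero_lt_one)] with t ht ht1
    exact le_of_lt (hf _ (K.convex.combo_closure_interior_mem_interior
      (subset_closure hx) hy (by linarith [Set.mem_Ioi.1 ht]) (Set.mem_Ioi.1 ht)
      (by ring)))
  -- the function x ↦ f g - f x is nonneg on C, has integral 0, but is positive on interior C
  have hmeas : MeasurableSet C := K.measurableSet
  have hconst : IntegrableOn (fun _ : EucSp n => f g) C :=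
    integrableOn_const K.volume_lt_top.ne
  have hfint : IntegrableOn (fun x => f x) C := K.integrableOn_comp _ f.continuous
  have hint_f : IntegrableOn (fun x => f g - f x) C := hconst.sub hfint
  have h1 : ∫ x in C, f x = f (∫ x in C, x) := by
    rw [hC]; exact ContinuousLinearMap.integral_comp_comm f K.integrableOn_id
  have h2 : f g = v⁻¹ * f (∫ x in C, x) := by
    rw [hgdef]
    show f ((volume C).toReal⁻¹ • ∫ x in C, x) = _
    rw [_root_.map_smul]
    simp [← hv, smul_eq_mul]
  have hint0 : ∫ x in C, (f g - f x) = 0 := by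
    rw [integral_sub hconst hfint, setIntegral_const, h1, h2, measureReal_def, ← hv, smul_eq_mul]
    field_simp
    simp
  have hnonneg : 0 ≤ᵐ[volume.restrict C] (fun x => f g - f x) :=
    (ae_restrict_iff' hmeas).2 (Filter.Eventually.of_forall
      (fun x hx => sub_nonneg.2 (hle x hx)))
  have hae : (fun x => f g - f x) =ᵐ[volume.restrict C] 0 :=
    (integral_eq_zero_iff_of_nonneg_ae hnonneg hint_f).1 hint0
  have hzero : volume.restrict C {x | f g - f x ≠ 0} = 0 := by
    have := Filter.EventuallyEq.eventually hae
    exact ae_iff.1 hae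
  have hsub : interior C ⊆ {x | f g - f x ≠ 0} := fun a ha =>
    sub_ne_zero.2 (ne_of_gt (hf a ha))
  have hpos : 0 < volume.restrict C (interior C) := by
    rw [Measure.restrict_apply isOpen_interior.measurableSet,
      Set.inter_eq_self_of_subset_left interior_subset]
    obtain ⟨x, hx⟩ := K.interior_nonempty
    obtain ⟨ε, hε, hball⟩ := Metric.isOpen_iff.1 isOpen_interior x hx
    calc (0:ℝ≥0∞) < volume (Metric.ball x ε) := measure_ball_pos _ _ hε
      _ ≤ _ := measure_mono hball
  exact absurd (le_antisymm (hzero ▸ measure_mono hsub) zero_le) (ne_of_gt hpos)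

lemma Kn.centroid_mem (K : Kn n) : centroid K.toSet ∈ K.toSet :=
  interior_subset K.centroid_mem_interior

end AuxDev
section AuxDev2
open Metric Set MeasureTheory
open scoped ENNReal NNReal
variable {n : ℕ}

lemma affImage_toSet (T : EucSp n ≃ᵃ[ℝ] EucSp n) (K : Kn n) :
    (affImage T K).toSet = ⇑T '' K.toSet := rfl

lemma Kn.toSet_injective : Function.Injective (Kn.toSet (n := n)) := by
  intro K L h
  exact Subtype.ext (ConvexBody.ext h)

lemma affImage_symm_affImage (T : EucSp n ≃ᵃ[ℝ] EucSp n) (K : Kn n) :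
    affImage T.symm (affImage T K) = K := by
  apply Kn.toSet_injective
  rw [affImage_toSet, affImage_toSet]
  rw [Set.image_image]
  simp

/-- The centroid commutes with invertible affine maps. -/
lemma centroid_affImage (T : EucSp n ≃ᵃ[ℝ] EucSp n) (K : Kn n) :
    centroid (affImage T K).toSet = T (centroid K.toSet) := by
  set C := K.toSet with hC
  set I : EucSp n := ∫ x in C, x with hI
  set v : ℝ := (volume C).toReal with hv
  have hv0 : 0 < v := K.volume_toReal_pos
  set L : EucSp n →L[ℝ] EucSp n := LinearMap.toContinuousLinearMap T.linear.toLinearMap with hL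
  set d : ℝ := LinearMap.det (T.linear.toLinearMap : EucSp n →ₗ[ℝ] EucSp n) with hd
  have hd0 : d ≠ 0 := by
    rw [hd]
    exact (LinearEquiv.isUnit_det' T.linear).ne_zero
  have habs : 0 < |d| := abs_pos.2 hd0
  have hLdet : (L : EucSp n →L[ℝ] EucSp n).det = d := by
    simp [hL, ContinuousLinearMap.det, hd]
  have hLapply : ∀ x, L x = T.linear x := fun x => rfl
  set b : EucSp n := T 0 with hb
  have hTeq : (⇑T : EucSp n → EucSp n) = fun x => L x + b := by
    funext x
    have := T.toAffineMap.linearMap_vsub x 0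
    simp only [vsub_eq_sub, sub_zero] at this
    have h2 : T.linear x = T x - T 0 := by
      simpa using this
    rw [hLapply, h2]
    abel
  have hF : ∀ x ∈ C, HasFDerivWithinAt (⇑T) L C x := by
    intro x _
    rw [hTeq]
    exact ((L.hasFDerivAt.add_const b).hasFDerivWithinAt)
  have hinj : Set.InjOn (⇑T) C := T.injective.injOn
  have hmeas : MeasurableSet C := K.measurableSet
  have hvol : (volume (⇑T '' C)).toReal = |d| * v := by
    have h := integral_image_eq_integral_abs_det_fderiv_smul volume hmeas hF hinj
      (fun _ => (1:ℝ))
    simp only [hLdet, smul_eq_mul, mul_one] at h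
    rw [setIntegral_const, setIntegral_const, smul_eq_mul, mul_one, smul_eq_mul] at h
    rw [← measureReal_def, h, mul_comm, hv, measureReal_def]
  have hint : ∫ x in ⇑T '' C, x = |d| • ∫ x in C, T x := by
    have h := integral_image_eq_integral_abs_det_fderiv_smul volume hmeas hF hinj
      (fun x => x)
    simp only [hLdet] at h
    rw [h, integral_smul]
  have hTx : ∫ x in C, T x = T.linear I + v • b := by
    rw [hTeq]
    have h1 : IntegrableOn (fun x => L x) C := K.integrableOn_comp _ L.continuous
    have h2 : IntegrableOn (fun _ : EucSp n => b) C :=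
      integrableOn_const K.volume_lt_top.ne
    rw [integral_add h1 h2, setIntegral_const, ContinuousLinearMap.integral_comp_comm L
      K.integrableOn_id]
    rw [hLapply, hI, hv]
    rw [measureReal_def, hC]
  show centroid (⇑T '' C) = T (centroid C)
  rw [centroid, centroid, hvol, hint, hTx, ← hI, ← hv]
  have hrhs : T (v⁻¹ • I) = T.linear (v⁻¹ • I) + b := by
    rw [hTeq]
    simp [hLapply]
  rw [hrhs, _root_.map_smul]
  have hsc : (|d| * v)⁻¹ * |d| = v⁻¹ := by field_simp
  rw [smul_smul, hsc, smul_add, smul_smul, inv_mul_cancel₀ hv0.ne', one_smul]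

end AuxDev2
section AuxDev3
open Metric Set MeasureTheory
open scoped ENNReal NNReal
variable {n : ℕ}

local notation "⟪" x ", " y "⟫" => @inner ℝ _ _ x y

/-- If a ball of radius `δ` is contained in `D` and `C` is a closed convex set within
Hausdorff distance `ε` of `D`, then the concentric ball of radius `δ - 2ε` is inside `C`. -/
lemma ball_subset_of_hausdorffDist_le {C D : Set (EucSp n)}
    (hCconv : Convex ℝ C) (hCc : IsClosed C) (hCne : C.Nonempty)
    {y : EucSp n} {δ ε : ℝ} (hεδ : 0 ≤ ε)
    (hball : Metric.ball y δ ⊆ D)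
    (hfin : EMetric.hausdorffEdist D C ≠ ⊤)
    (hd : Metric.hausdorffDist D C ≤ ε) :
    Metric.ball y (δ - 2*ε) ⊆ C := by
  intro z hz
  by_contra hzC
  have hzy : ‖z - y‖ < δ - 2*ε := by rw [← dist_eq_norm]; exact Metric.mem_ball.1 hz
  have hδpos : 0 < δ := by
    have : (0:ℝ) ≤ ‖z - y‖ := norm_nonneg _
    linarith
  obtain ⟨p, hpC, hpmin⟩ := exists_norm_eq_iInf_of_complete_convex hCne
    hCc.isComplete hCconv z
  have hp : ∀ w ∈ C, ⟪z - p, w - p⟫ ≤ 0 :=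
    (norm_eq_iInf_iff_real_inner_le_zero hCconv hpC).1 hpmin
  set u := z - p with hu
  have hm : 0 < ‖u‖ := by
    rw [norm_pos_iff]
    intro h0
    exact hzC (by rwa [show z = p by rwa [sub_eq_zero] at h0])
  set m := ‖u‖ with hmdef
  set t := max 0 (δ - m/4) with ht
  have ht0 : 0 ≤ t := le_max_left _ _
  have htδ : t < δ := max_lt hδpos (by linarith)
  set y' := y + (t * m⁻¹) • u with hy'
  have hy'D : y' ∈ D := hball (by
    rw [Metric.mem_ball, dist_eq_norm]
    rw [hy', add_sub_cancel_left, norm_smul, Real.norm_eq_abs,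
      abs_of_nonneg (by positivity), mul_assoc, inv_mul_cancel₀ hm.ne', mul_one]
    exact htδ)
  have hinf : Metric.infDist y' C ≤ ε :=
    le_trans (Metric.infDist_le_hausdorffDist_of_mem hy'D hfin) hd
  obtain ⟨w, hwC, hwd⟩ := (Metric.infDist_lt_iff hCne).1
    (lt_of_le_of_lt hinf (by linarith : ε < ε + m/4))
  have hwd' : ‖y' - w‖ < ε + m/4 := by rwa [dist_eq_norm] at hwd
  have huu : ⟪u, u⟫ = m * m := real_inner_self_eq_norm_mul_norm u
  have f1 : ⟪u, w⟫ - ⟪u, p⟫ ≤ 0 := by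
    have h := hp w hwC
    rwa [inner_sub_right] at h
  have f4 : ⟪u, z⟫ - ⟪u, p⟫ = m * m := by
    have h : ⟪u, z - p⟫ = ⟪u, z⟫ - ⟪u, p⟫ := inner_sub_right _ _ _
    rw [← hu] at h
    linarith [huu, h.symm]
  have f3 : ⟪u, z⟫ - ⟪u, y⟫ ≤ m * ‖z - y‖ := by
    have h : ⟪u, z - y⟫ ≤ ‖u‖ * ‖z - y‖ := real_inner_le_norm _ _
    rwa [inner_sub_right] at h
  have f5 : ⟪u, y'⟫ = ⟪u, y⟫ + t * m := by
    rw [hy', inner_add_right, real_inner_smul_right, huu]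
    have : (t * m⁻¹) * (m * m) = t * m := by field_simp
    rw [this]
  have f6 : ⟪u, y'⟫ - ⟪u, w⟫ ≤ m * (ε + m/4) := by
    have h : ⟪u, y' - w⟫ ≤ ‖u‖ * ‖y' - w‖ := real_inner_le_norm _ _
    rw [inner_sub_right] at h
    nlinarith [norm_nonneg (y' - w)]
  have hmul : m * ‖z - y‖ ≤ m * (δ - 2*ε) := by
    exact mul_le_mul_of_nonneg_left hzy.le hm.le
  have key : m * t < m * (δ - ε - (3/4)*m) := by nlinarith [f1, f4, f3, f5, f6, hmul]
  have ht' : t < δ - ε - (3/4)*m := (mul_lt_mul_iff_right₀ hm).1 key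
  rcases le_or_gt (δ - m/4) 0 with hcase | hcase
  · have htt : t = 0 := max_eq_left hcase
    rw [htt] at ht'
    linarith
  · have htt : t = δ - m/4 := max_eq_right hcase.le
    rw [htt] at ht'
    linarith

end AuxDev3
section AuxDev4
open Metric Set MeasureTheory Filter
open scoped ENNReal NNReal Topology
variable {n : ℕ}

lemma Kn.dist_eq (K L : Kn n) : dist K L = Metric.hausdorffDist K.toSet L.toSet := rfl

lemma Kn.hausdorffEdist_ne_top (K L : Kn n) :
    EMetric.hausdorffEdist K.toSet L.toSet ≠ ⊤ :=
  ConvexBody.hausdorffEdist_ne_top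

lemma Kn.tendsto_hausdorffDist {C : Kn n} {Ci : ℕ → Kn n}
    (h : Tendsto Ci atTop (𝓝 C)) :
    Tendsto (fun i => Metric.hausdorffDist (Ci i).toSet C.toSet) atTop (𝓝 0) := by
  have := tendsto_iff_dist_tendsto_zero.1 h
  simpa [Kn.dist_eq] using this

lemma Kn.eventually_mem {C : Kn n} {Ci : ℕ → Kn n} (h : Tendsto Ci atTop (𝓝 C))
    {x : EucSp n} (hx : x ∈ interior C.toSet) : ∀ᶠ i in atTop, x ∈ (Ci i).toSet := by
  obtain ⟨δ, hδ, hball⟩ := Metric.isOpen_iff.1 isOpen_interior x hx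
  have hballC : Metric.ball x δ ⊆ C.toSet := hball.trans interior_subset
  filter_upwards [(Kn.tendsto_hausdorffDist h).eventually
    (gt_mem_nhds (show (0:ℝ) < δ/4 by linarith))] with i hi
  have hsub : Metric.ball x (δ - 2*(δ/4)) ⊆ (Ci i).toSet := by
    refine ball_subset_of_hausdorffDist_le (Ci i).convex (Ci i).isClosed (Ci i).nonempty
      (by linarith) hballC ?_ ?_
    · rw [EMetric.hausdorffEdist, hausdorffEDist_comm]; exact Kn.hausdorffEdist_ne_top _ _
    · rw [Metric.hausdorffDist_comm]; exact hi.le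
  exact hsub (by simp [Metric.mem_ball]; linarith)

lemma Kn.eventually_not_mem {C : Kn n} {Ci : ℕ → Kn n} (h : Tendsto Ci atTop (𝓝 C))
    {x : EucSp n} (hx : x ∉ C.toSet) : ∀ᶠ i in atTop, x ∉ (Ci i).toSet := by
  have hd0 : 0 < Metric.infDist x C.toSet :=
    (C.isClosed.notMem_iff_infDist_pos C.nonempty).1 hx
  filter_upwards [(Kn.tendsto_hausdorffDist h).eventually
    (gt_mem_nhds hd0)] with i hi hmem
  exact absurd (Metric.infDist_le_hausdorffDist_of_mem hmem (Kn.hausdorffEdist_ne_top _ _))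
    (not_le.2 hi)

lemma Kn.indicator_tendsto {F : Type*} [NormedAddCommGroup F] (f : EucSp n → F)
    {C : Kn n} {Ci : ℕ → Kn n} (h : Tendsto Ci atTop (𝓝 C)) :
    ∀ᵐ x : EucSp n, Tendsto (fun i => (Ci i).toSet.indicator f x) atTop
      (𝓝 (C.toSet.indicator f x)) := by
  have hfr : volume (frontier C.toSet) = 0 := C.convex.addHaar_frontier volume
  filter_upwards [(ae_iff.2 (by simpa using hfr) :
    ∀ᵐ x : EucSp n, x ∉ frontier C.toSet)] with x hx
  by_cases hxC : x ∈ C.toSet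
  · have hxint : x ∈ interior C.toSet := by
      by_contra hxi
      exact hx (C.isClosed.frontier_eq ▸ Set.mem_diff_of_mem hxC hxi)
    refine Tendsto.congr' ?_ tendsto_const_nhds
    filter_upwards [Kn.eventually_mem h hxint] with i hi
    rw [Set.indicator_of_mem hi, Set.indicator_of_mem hxC]
  · refine Tendsto.congr' ?_ tendsto_const_nhds
    filter_upwards [Kn.eventually_not_mem h hxC] with i hi
    rw [Set.indicator_of_notMem hi]
    rw [Set.indicator_of_notMem hxC]

end AuxDev4
section AuxDev5
open Metric Set MeasureTheory Filter
open scoped ENNReal NNReal Topology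
variable {n : ℕ}

lemma Kn.eventually_subset_closedBall {C : Kn n} {Ci : ℕ → Kn n}
    (h : Tendsto Ci atTop (𝓝 C)) :
    ∃ R : ℝ, 0 ≤ R ∧ C.toSet ⊆ Metric.closedBall 0 R ∧
      ∀ᶠ i in atTop, (Ci i).toSet ⊆ Metric.closedBall 0 R := by
  obtain ⟨R0, hR0⟩ := C.isCompact.isBounded.subset_closedBall 0
  refine ⟨max R0 0 + 2, by positivity, hR0.trans
    (Metric.closedBall_subset_closedBall (by linarith [le_max_left R0 (0:ℝ)])), ?_⟩
  filter_upwards [(Kn.tendsto_hausdorffDist h).eventually (gt_mem_nhds one_pos)] with i hi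
  intro x hx
  have h1 : Metric.infDist x C.toSet < 2 :=
    lt_trans (lt_of_le_of_lt (Metric.infDist_le_hausdorffDist_of_mem hx
      (Kn.hausdorffEdist_ne_top _ _)) hi) one_lt_two
  obtain ⟨w, hw, hd⟩ := (Metric.infDist_lt_iff C.nonempty).1 h1
  have hw0 : dist w 0 ≤ max R0 0 := le_trans (Metric.mem_closedBall.1 (hR0 hw)) (le_max_left _ _)
  have : dist x 0 ≤ dist x w + dist w 0 := dist_triangle _ _ _
  rw [Metric.mem_closedBall]
  linarith

lemma Kn.tendsto_volume {C : Kn n} {Ci : ℕ → Kn n} (h : Tendsto Ci atTop (𝓝 C)) :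
    Tendsto (fun i => (volume (Ci i).toSet).toReal) atTop (𝓝 (volume C.toSet).toReal) := by
  obtain ⟨R, hR0, hCR, hev⟩ := Kn.eventually_subset_closedBall h
  have hb : Integrable ((Metric.closedBall (0:EucSp n) R).indicator (1 : EucSp n → ℝ)) :=
    (integrableOn_const measure_closedBall_lt_top.ne).integrable_indicator
      measurableSet_closedBall
  have key := tendsto_integral_filter_of_dominated_convergence (μ := volume)
    (F := fun i => (Ci i).toSet.indicator (1 : EucSp n → ℝ))
    (f := C.toSet.indicator (1 : EucSp n → ℝ))
    ((Metric.closedBall (0:EucSp n) R).indicator (1 : EucSp n → ℝ))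
    (Eventually.of_forall fun i =>
      (measurable_const.indicator (Ci i).measurableSet).aestronglyMeasurable)
    (by
      filter_upwards [hev] with i hi
      refine ae_of_all _ fun x => ?_
      by_cases hx : x ∈ (Ci i).toSet
      · rw [Set.indicator_of_mem hx, Set.indicator_of_mem (hi hx)]
        simp
      · rw [Set.indicator_of_notMem hx]
        simp only [norm_zero]
        exact Set.indicator_apply_nonneg fun _ => zero_le_one)
    hb
    (Kn.indicator_tendsto _ h)
  simpa [integral_indicator_one (Kn.measurableSet _), integral_indicator_one C.measurableSet,
      measureReal_def]
    using key

lemma Kn.tendsto_integral {C : Kn n} {Ci : ℕ → Kn n} (h : Tendsto Ci atTop (𝓝 C)) :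
    Tendsto (fun i => ∫ x in (Ci i).toSet, x) atTop (𝓝 (∫ x in C.toSet, x)) := by
  obtain ⟨R, hR0, hCR, hev⟩ := Kn.eventually_subset_closedBall h
  have hb : Integrable ((Metric.closedBall (0:EucSp n) R).indicator (fun _ => R)) :=
    (integrableOn_const measure_closedBall_lt_top.ne).integrable_indicator
      measurableSet_closedBall
  have key := tendsto_integral_filter_of_dominated_convergence (μ := volume)
    (F := fun i => (Ci i).toSet.indicator (fun x => x))
    (f := C.toSet.indicator (fun x => x))
    ((Metric.closedBall (0:EucSp n) R).indicator (fun _ => R))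
    (Eventually.of_forall fun i =>
      (measurable_id.indicator (Ci i).measurableSet).aestronglyMeasurable)
    (by
      filter_upwards [hev] with i hi
      refine ae_of_all _ fun x => ?_
      by_cases hx : x ∈ (Ci i).toSet
      · rw [Set.indicator_of_mem hx, Set.indicator_of_mem (hi hx)]
        simpa [dist_eq_norm] using Metric.mem_closedBall.1 (hi hx)
      · rw [Set.indicator_of_notMem hx]
        simp only [norm_zero]
        exact Set.indicator_apply_nonneg fun _ => hR0)
    hb
    (Kn.indicator_tendsto _ h)
  rw [integral_indicator C.measurableSet] at key
  refine key.congr fun i => ?_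
  rw [integral_indicator (Kn.measurableSet _)]

lemma Kn.tendsto_centroid {C : Kn n} {Ci : ℕ → Kn n} (h : Tendsto Ci atTop (𝓝 C)) :
    Tendsto (fun i => centroid (Ci i).toSet) atTop (𝓝 (centroid C.toSet)) := by
  have hv := (Kn.tendsto_volume h).inv₀ C.volume_toReal_pos.ne'
  exact hv.smul (Kn.tendsto_integral h)

end AuxDev5
section AuxDev6
open Metric Set MeasureTheory Filter
open scoped ENNReal NNReal Topology
variable {n : ℕ}

/-- The solid cube `[-1,1]^n`. -/
def cubeSet (n : ℕ) : Set (EucSp n) := {x | ∀ j, |x j| ≤ 1}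

/-- The standard solid simplex. -/
def spxSet (n : ℕ) : Set (EucSp n) := {x | (∀ j, 0 ≤ x j) ∧ ∑ j, x j ≤ 1}

/-- A normalized body: contains the standard simplex, contained in the cube. -/
def IsNormalized (K : Kn n) : Prop := spxSet n ⊆ K.toSet ∧ K.toSet ⊆ cubeSet n

lemma abs_coord_le_norm (y : EucSp n) (j : Fin n) : |y j| ≤ ‖y‖ := by
  rw [EuclideanSpace.norm_eq]
  rw [show |y j| = Real.sqrt (|y j|^2) by rw [Real.sqrt_sq_eq_abs, abs_abs]]
  apply Real.sqrt_le_sqrt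
  exact Finset.single_le_sum (f := fun i => |y i|^2) (fun i _ => sq_nonneg _)
    (Finset.mem_univ j)

lemma norm_le_of_mem_cubeSet {x : EucSp n} (hx : x ∈ cubeSet n) : ‖x‖ ≤ Real.sqrt n := by
  rw [EuclideanSpace.norm_eq]
  apply Real.sqrt_le_sqrt
  calc ∑ i, |x i|^2 ≤ ∑ _i : Fin n, (1:ℝ) := by
        apply Finset.sum_le_sum
        intro i _
        have := hx i
        nlinarith [abs_nonneg (x i)]
    _ = n := by simp

lemma isCompact_cubeSet : IsCompact (cubeSet n) := by
  apply Metric.isCompact_of_isClosed_isBounded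
  · have : cubeSet n = ⋂ j, {x : EucSp n | |x j| ≤ 1} := by
      ext x; simp [cubeSet]
    rw [this]
    exact isClosed_iInter fun j =>
      IsClosed.preimage (continuous_abs.comp (EuclideanSpace.proj (𝕜 := ℝ) j).continuous)
        isClosed_Iic
  · apply (Metric.isBounded_closedBall (x := (0:EucSp n)) (r := Real.sqrt n)).subset
    intro x hx
    simpa [Metric.mem_closedBall, dist_eq_norm] using norm_le_of_mem_cubeSet hx

/-- center of a small ball inside the simplex -/
noncomputable def spxCenter (n : ℕ) : EucSp n := WithLp.toLp 2 (fun _ => 1/(2*((n:ℝ)+1)))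

lemma ball_subset_spxSet :
    Metric.ball (spxCenter n) (1/(2*((n:ℝ)+1))) ⊆ spxSet n := by
  intro x hx
  set r : ℝ := 1/(2*((n:ℝ)+1)) with hr
  have hr0 : 0 < r := by positivity
  have hxc : ∀ j, |x j - r| < r := by
    intro j
    have h1 : |(x - spxCenter n) j| ≤ ‖x - spxCenter n‖ := abs_coord_le_norm _ j
    have h2 : ‖x - spxCenter n‖ < r := by rwa [Metric.mem_ball, dist_eq_norm] at hx
    have h3 : (x - spxCenter n) j = x j - r := rfl
    rw [h3] at h1
    linarith
  constructor
  · intro j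
    have := abs_lt.1 (hxc j)
    linarith [this.1]
  · have hub : ∀ j : Fin n, x j ≤ 2*r := by
      intro j
      have := abs_lt.1 (hxc j)
      linarith [this.2]
    calc ∑ j, x j ≤ ∑ _j : Fin n, 2*r := Finset.sum_le_sum fun j _ => hub j
      _ = n * (2*r) := by simp [mul_comm]
      _ ≤ 1 := by
          rw [hr]
          have hn : (0:ℝ) ≤ n := Nat.cast_nonneg n
          rw [div_eq_inv_mul]
          field_simp
          linarith

lemma spxSet_subset_cubeSet : spxSet n ⊆ cubeSet n := by
  rintro x ⟨h0, hsum⟩ j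
  rw [abs_le]
  constructor
  · linarith [h0 j]
  · calc x j ≤ ∑ i, x i := Finset.single_le_sum (fun i _ => h0 i) (Finset.mem_univ j)
      _ ≤ 1 := hsum

/-- Blaschke-type sequential compactness for normalized bodies. -/
lemma exists_subseq_tendsto {Ki : ℕ → Kn n} (hK : ∀ i, IsNormalized (Ki i)) :
    ∃ (φ : ℕ → ℕ) (L : Kn n), StrictMono φ ∧ IsNormalized L ∧
      Tendsto (Ki ∘ φ) atTop (𝓝 L) := by
  have hQc : IsCompact (cubeSet n) := isCompact_cubeSet
  haveI : CompactSpace (cubeSet n) := isCompact_iff_compactSpace.1 hQc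
  set S : ℕ → TopologicalSpace.NonemptyCompacts (cubeSet n) := fun i =>
    ⟨⟨Subtype.val ⁻¹' (Ki i).toSet,
      ((Ki i).isClosed.preimage continuous_subtype_val).isCompact⟩, by
        obtain ⟨x, hx⟩ := (Ki i).nonempty
        exact ⟨⟨x, (hK i).2 hx⟩, hx⟩⟩ with hS
  obtain ⟨Slim, -, φ, hφ, hconv⟩ := isCompact_univ.tendsto_subseq (fun i => mem_univ (S i))
  have hsets : ∀ i, Subtype.val '' ((S i) : Set (cubeSet n)) = (Ki i).toSet := by
    intro i
    have hcoe : ((S i : Set (cubeSet n))) = Subtype.val ⁻¹' (Ki i).toSet := rfl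
    rw [hcoe, Subtype.image_preimage_coe]
    exact Set.inter_eq_right.2 (hK i).2
  set LS : Set (EucSp n) := Subtype.val '' (Slim : Set (cubeSet n)) with hLS
  have hLcomp : IsCompact LS := Slim.isCompact.image continuous_subtype_val
  have hLclosed : IsClosed LS := hLcomp.isClosed
  have hLne : LS.Nonempty := Slim.nonempty.image _
  have hLsub : LS ⊆ cubeSet n := by
    rintro x ⟨y, -, rfl⟩; exact y.2
  -- Hausdorff distance convergence
  have hdist : Tendsto (fun j => Metric.hausdorffDist (Ki (φ j)).toSet LS) atTop (𝓝 0) := by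
    have h1 : Tendsto (fun j => dist (S (φ j)) Slim) atTop (𝓝 0) :=
      tendsto_iff_dist_tendsto_zero.1 hconv
    refine h1.congr fun j => ?_
    rw [Metric.NonemptyCompacts.dist_eq, ← hsets (φ j), hLS,
      Metric.hausdorffDist_image isometry_subtype_coe]
  have hfin : ∀ j, EMetric.hausdorffEdist (Ki (φ j)).toSet LS ≠ ⊤ := fun j =>
    Metric.hausdorffEdist_ne_top_of_nonempty_of_bounded (Ki (φ j)).nonempty hLne
      (Ki (φ j)).isCompact.isBounded hLcomp.isBounded
  -- membership of limit points
  have hmem_of_all : ∀ x : EucSp n, (∀ j, x ∈ (Ki (φ j)).toSet) → x ∈ LS := by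
    intro x hx
    apply (hLclosed.mem_iff_infDist_zero hLne).2
    refine le_antisymm ?_ Metric.infDist_nonneg
    refine ge_of_tendsto hdist (Eventually.of_forall fun j => ?_)
    exact Metric.infDist_le_hausdorffDist_of_mem (hx j) (hfin j)
  have hspx : spxSet n ⊆ LS := fun x hx =>
    hmem_of_all x fun j => (hK (φ j)).1 hx
  -- convexity of the limit
  have hLconv : Convex ℝ LS := by
    intro a ha b hb s t hs ht hst
    apply (hLclosed.mem_iff_infDist_zero hLne).2
    refine le_antisymm ?_ Metric.infDist_nonneg
    have key : ∀ j, Metric.infDist (s • a + t • b) LS ≤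
        2 * Metric.hausdorffDist (Ki (φ j)).toSet LS := by
      intro j
      set d := Metric.hausdorffDist (Ki (φ j)).toSet LS with hd
      have hd0 : 0 ≤ d := Metric.hausdorffDist_nonneg
      obtain ⟨aj, hajK, haj⟩ := (Ki (φ j)).isCompact.exists_infDist_eq_dist
        (Ki (φ j)).nonempty a
      obtain ⟨bj, hbjK, hbj⟩ := (Ki (φ j)).isCompact.exists_infDist_eq_dist
        (Ki (φ j)).nonempty b
      have hda : dist a aj ≤ d := by
        rw [← haj]
        calc Metric.infDist a (Ki (φ j)).toSet
            ≤ Metric.hausdorffDist LS (Ki (φ j)).toSet :=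
              Metric.infDist_le_hausdorffDist_of_mem ha
                (by rw [hausdorffEDist_comm]; exact hfin j)
          _ = d := Metric.hausdorffDist_comm
      have hdb : dist b bj ≤ d := by
        rw [← hbj]
        calc Metric.infDist b (Ki (φ j)).toSet
            ≤ Metric.hausdorffDist LS (Ki (φ j)).toSet :=
              Metric.infDist_le_hausdorffDist_of_mem hb
                (by rw [hausdorffEDist_comm]; exact hfin j)
          _ = d := Metric.hausdorffDist_comm
      have hcj : s • aj + t • bj ∈ (Ki (φ j)).toSet :=
        (Ki (φ j)).convex hajK hbjK hs ht hst
      have hdistc : dist (s • a + t • b) (s • aj + t • bj) ≤ d := by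
        rw [dist_eq_norm]
        have heq : s • a + t • b - (s • aj + t • bj) = s • (a - aj) + t • (b - bj) := by
          module
        rw [heq]
        calc ‖s • (a - aj) + t • (b - bj)‖ ≤ ‖s • (a - aj)‖ + ‖t • (b - bj)‖ :=
              norm_add_le _ _
          _ = s * ‖a - aj‖ + t * ‖b - bj‖ := by
              rw [norm_smul, norm_smul, Real.norm_eq_abs, Real.norm_eq_abs,
                abs_of_nonneg hs, abs_of_nonneg ht]
          _ ≤ s * d + t * d := by
              rw [dist_eq_norm] at hda hdb
              exact add_le_add (mul_le_mul_of_nonneg_left hda hs)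
                (mul_le_mul_of_nonneg_left hdb ht)
          _ = d := by rw [← add_mul, hst, one_mul]
      calc Metric.infDist (s • a + t • b) LS
          ≤ Metric.infDist (s • aj + t • bj) LS + dist (s • a + t • b) (s • aj + t • bj) :=
            Metric.infDist_le_infDist_add_dist
        _ ≤ Metric.hausdorffDist (Ki (φ j)).toSet LS + d :=
            add_le_add (Metric.infDist_le_hausdorffDist_of_mem hcj (hfin j)) hdistc
        _ = 2 * d := by rw [hd]; ring
    refine ge_of_tendsto (by simpa using hdist.const_mul 2) (Eventually.of_forall key)
  -- limit has nonempty interior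
  have hLint : (interior LS).Nonempty := by
    refine ⟨spxCenter n, ?_⟩
    have hball : Metric.ball (spxCenter n) (1/(2*((n:ℝ)+1))) ⊆ LS :=
      (ball_subset_spxSet).trans hspx
    exact interior_maximal hball Metric.isOpen_ball
      (Metric.mem_ball_self (by positivity))
  refine ⟨φ, ⟨⟨LS, hLconv, hLcomp, hLne⟩, hLint⟩, hφ, ⟨hspx, hLsub⟩, ?_⟩
  refine tendsto_iff_dist_tendsto_zero.2 ?_
  exact hdist
end AuxDev6
section AuxDev7
open Metric Set MeasureTheory Filter
open scoped ENNReal NNReal Topology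
variable {n : ℕ}

/-- Matrix of edge vectors of an `(n+1)`-tuple of points. -/
noncomputable def matOf (v : Fin (n+1) → EucSp n) : Matrix (Fin n) (Fin n) ℝ :=
  Matrix.of fun i j => v j.succ i - v 0 i

lemma continuous_matOf_det :
    Continuous fun v : Fin (n+1) → EucSp n => (matOf v).det := by
  apply Continuous.matrix_det
  apply continuous_matrix
  intro i j
  exact ((EuclideanSpace.proj (𝕜 := ℝ) i).continuous.comp (continuous_apply (j.succ))).sub
    ((EuclideanSpace.proj (𝕜 := ℝ) i).continuous.comp (continuous_apply 0))

lemma sum_smul_single (x : EucSp n) :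
    ∑ j, x j • EuclideanSpace.single j (1:ℝ) = x := by
  have h := (EuclideanSpace.basisFun (Fin n) ℝ).sum_repr x
  simpa [EuclideanSpace.basisFun_apply, EuclideanSpace.basisFun_repr] using h

/-- Every convex body has an affine image which is normalized. -/
lemma exists_affine_normalized (K : Kn n) :
    ∃ T : EucSp n ≃ᵃ[ℝ] EucSp n, IsNormalized (affImage T K) := by
  classical
  -- the compact set of (n+1)-tuples of points of K
  set D : Set (Fin (n+1) → EucSp n) := Set.univ.pi (fun _ => K.toSet) with hD
  have hDc : IsCompact D := isCompact_univ_pi fun _ => K.isCompact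
  have hDne : D.Nonempty := by
    obtain ⟨x, hx⟩ := K.nonempty
    exact ⟨fun _ => x, fun i _ => hx⟩
  obtain ⟨vm, hvmD, hmax⟩ := hDc.exists_isMaxOn hDne
    (continuous_matOf_det.abs.continuousOn)
  have hvmK : ∀ k, vm k ∈ K.toSet := fun k => hvmD k (Set.mem_univ k)
  set Mv : Matrix (Fin n) (Fin n) ℝ := matOf vm with hMv
  -- positivity of the maximal determinant
  have hdet0 : |Mv.det| > 0 := by
    obtain ⟨z, hz⟩ := K.interior_nonempty
    obtain ⟨ε, hε, hball⟩ := Metric.isOpen_iff.1 isOpen_interior z hz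
    have hballK : Metric.ball z ε ⊆ K.toSet := hball.trans interior_subset
    set δ : ℝ := ε/2 with hδ
    have hδ0 : 0 < δ := by positivity
    set w : Fin (n+1) → EucSp n :=
      Fin.cons z (fun j => z + δ • EuclideanSpace.single j 1) with hw
    have hwD : w ∈ D := by
      intro k _
      refine Fin.cases ?_ ?_ k
      · rw [hw]; simpa using hballK (Metric.mem_ball_self hε)
      · intro j
        rw [hw]
        simp only [Fin.cons_succ]
        apply hballK
        rw [Metric.mem_ball, dist_eq_norm]
        have : z + δ • EuclideanSpace.single j 1 - z = δ • EuclideanSpace.single j 1 := by abel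
        rw [this, norm_smul, Real.norm_eq_abs, abs_of_pos hδ0,
          EuclideanSpace.norm_single]
        simp only [norm_one, mul_one]
        linarith
    have hmatw : matOf w = Matrix.diagonal (fun _ => δ) := by
      ext i j
      have hws : w j.succ = z + δ • EuclideanSpace.single j 1 := by rw [hw, Fin.cons_succ]
      have hw0 : w 0 = z := by rw [hw, Fin.cons_zero]
      show w j.succ i - w 0 i = _
      rw [hws, hw0]
      have hpi : (z + δ • EuclideanSpace.single j 1 : EucSp n) i
          = z i + δ * (EuclideanSpace.single j (1:ℝ)) i := rfl
      rw [hpi, EuclideanSpace.single_apply, Matrix.diagonal_apply]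
      by_cases h : i = j <;> simp [h, eq_comm]
    have hwdet : |(matOf w).det| = δ^n := by
      rw [hmatw, Matrix.det_diagonal, Finset.prod_const]
      simp [abs_of_pos (pow_pos hδ0 n), abs_of_pos hδ0]
    have := hmax hwD
    simp only [← hMv] at this
    calc (0:ℝ) < δ^n := pow_pos hδ0 n
      _ = |(matOf w).det| := hwdet.symm
      _ ≤ |Mv.det| := this
  have hdetne : Mv.det ≠ 0 := fun h => by simp [h] at hdet0
  have hInv : Invertible Mv := Mv.invertibleOfIsUnitDet (isUnit_iff_ne_zero.2 hdetne)
  -- the linear equivalence with matrix Mv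
  set Leq : EucSp n ≃ₗ[ℝ] EucSp n :=
    ((EuclideanSpace.equiv (Fin n) ℝ).toLinearEquiv.trans (Mv.toLinearEquiv' hInv)).trans
      (EuclideanSpace.equiv (Fin n) ℝ).symm.toLinearEquiv with hLeqdef
  have hLeq : ∀ (x : EucSp n) (i : Fin n), Leq x i = Mv.mulVec x i := by
    intro x i
    show (Mv.toLinearEquiv' hInv : (Fin n → ℝ) →ₗ[ℝ] (Fin n → ℝ)) x i = Mv.mulVec x i
    rw [Matrix.toLinearEquiv'_apply, Matrix.toLin'_apply]
  set T : EucSp n ≃ᵃ[ℝ] EucSp n :=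
    (AffineEquiv.constVAdd ℝ (EucSp n) (-(vm 0))).trans Leq.symm.toAffineEquiv with hT
  have hTapp : ∀ p, T p = Leq.symm (-(vm 0) + p) := fun p => rfl
  set K' : Set (EucSp n) := (affImage T K).toSet with hK'
  have hK'img : K' = ⇑T '' K.toSet := rfl
  have hK'conv : Convex ℝ K' := (affImage T K).convex
  -- the key equation : Leq x computed from a preimage point
  have hpre : ∀ {x : EucSp n}, x ∈ K' → ∃ y ∈ K.toSet, ∀ i, Mv.mulVec x i = y i - vm 0 i := by
    intro x hx
    rw [hK'img] at hx
    obtain ⟨y, hy, hTy⟩ := hx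
    refine ⟨y, hy, fun i => ?_⟩
    have h1 : Leq x = -(vm 0) + y := by
      rw [← hTy, hTapp, LinearEquiv.apply_symm_apply]
    rw [← hLeq, h1]
    simp [sub_eq_neg_add]
  -- (b) K' is contained in the cube
  have hcube : K' ⊆ cubeSet n := by
    intro x hx j
    obtain ⟨y, hyK, hyc⟩ := hpre hx
    set v' : Fin (n+1) → EucSp n := Function.update vm j.succ y with hv'
    have hv'D : v' ∈ D := by
      intro k _
      rw [hv', Function.update_apply]
      by_cases hk : k = j.succ <;> simp [hk, hvmK, hyK]
    have hM' : matOf v' = Mv.updateCol j (fun i => Mv.mulVec x i) := by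
      ext i k
      rw [Matrix.updateCol_apply]
      by_cases hk : k = j
      · subst hk
        rw [if_pos rfl]
        simp only [matOf, Matrix.of_apply, hv']
        rw [Function.update_self, Function.update_of_ne (Fin.succ_ne_zero k).symm]
        exact (hyc i).symm
      · rw [if_neg hk]
        simp only [matOf, Matrix.of_apply, hv']
        rw [Function.update_of_ne (fun h => hk (Fin.succ_injective n h)),
          Function.update_of_ne (Fin.succ_ne_zero j).symm]
        rfl
    have hfac : Mv.updateCol j (fun i => Mv.mulVec x i) =
        Mv * ((1 : Matrix (Fin n) (Fin n) ℝ).updateCol j (fun i => x i)) := by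
      ext i k
      rw [Matrix.mul_apply, Matrix.updateCol_apply]
      simp only [Matrix.updateCol_apply]
      by_cases hk : k = j
      · simp only [hk, if_pos rfl]
        simp [Matrix.mulVec, dotProduct]
      · simp only [if_neg hk]
        simp [Matrix.one_apply, mul_ite, mul_one, mul_zero]
    have hdet' : (matOf v').det = Mv.det * x j := by
      rw [hM', hfac, Matrix.det_mul]
      congr 1
      rw [← Matrix.cramer_apply, Matrix.cramer_one]
      rfl
    have hle : |(matOf v').det| ≤ |Mv.det| := hmax hv'D
    rw [hdet', abs_mul] at hle
    exact (mul_le_iff_le_one_right hdet0).1 hle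
  -- (a) K' contains the standard simplex
  have h0K' : (0 : EucSp n) ∈ K' := by
    rw [hK'img]
    refine ⟨vm 0, hvmK 0, ?_⟩
    rw [hTapp]
    simp
  have hsingleK' : ∀ j : Fin n, EuclideanSpace.single j (1:ℝ) ∈ K' := by
    intro j
    rw [hK'img]
    refine ⟨vm j.succ, hvmK j.succ, ?_⟩
    rw [hTapp]
    have hcol : -(vm 0) + vm j.succ = Leq (EuclideanSpace.single j 1) := by
      ext i
      have h1 : Leq (EuclideanSpace.single j 1) i = Mv.mulVec (EuclideanSpace.single j 1) i :=
        hLeq _ i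
      have h2 : Mv.mulVec (EuclideanSpace.single j 1) i = Mv i j := by
        simp [Matrix.mulVec, dotProduct, EuclideanSpace.single_apply]
      have h3 : Mv i j = vm j.succ i - vm 0 i := rfl
      have h4 : (-(vm 0) + vm j.succ) i = vm j.succ i - vm 0 i := by
        simp [PiLp.add_apply, PiLp.neg_apply]
        ring
      rw [h4, h1, h2, h3]
    rw [hcol, LinearEquiv.symm_apply_apply]
  have hspx' : spxSet n ⊆ K' := by
    rintro x ⟨hx0, hxs⟩
    set cw : Fin (n+1) → ℝ := Fin.cons (1 - ∑ j, x j) (fun j => x j) with hcw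
    set cz : Fin (n+1) → EucSp n := Fin.cons 0 (fun j => EuclideanSpace.single j (1:ℝ)) with hcz
    have hxeq : x = ∑ i : Fin (n+1), cw i • cz i := by
      rw [Fin.sum_univ_succ]
      simp only [hcw, hcz, Fin.cons_zero, Fin.cons_succ, smul_zero, zero_add]
      exact (sum_smul_single x).symm
    rw [hxeq]
    apply hK'conv.sum_mem
    · intro i _
      refine Fin.cases ?_ ?_ i
      · simp only [hcw, Fin.cons_zero]
        linarith
      · intro j
        simp only [hcw, Fin.cons_succ]
        exact hx0 j
    · rw [Fin.sum_univ_succ]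
      simp only [hcw, Fin.cons_zero, Fin.cons_succ]
      ring
    · intro i _
      refine Fin.cases ?_ ?_ i
      · simp only [hcz, Fin.cons_zero]
        exact h0K'
      · intro j
        simp only [hcz, Fin.cons_succ]
        exact hsingleK' j
  exact ⟨T, hspx', hcube⟩
end AuxDev7
section AuxDev8
open Metric Set MeasureTheory Filter
open scoped ENNReal NNReal Topology
variable {n : ℕ}

/-- Uniform inradius around the centroid of `A K` over normalized bodies `K`. -/
lemma exists_uniform_radius (A : Kn n → Kn n) (hA : IsAffineInvariantSetMap A) :
    ∃ r : ℝ, 0 < r ∧ ∀ K : Kn n, IsNormalized K →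
      Metric.ball (centroid (A K).toSet) r ⊆ (A K).toSet := by
  by_contra hcon
  push_neg at hcon
  have hbad : ∀ m : ℕ, ∃ K : Kn n, IsNormalized K ∧
      ¬ Metric.ball (centroid (A K).toSet) (1/((m:ℝ)+1)) ⊆ (A K).toSet := by
    intro m
    obtain ⟨K, hK1, hK2⟩ := hcon (1/((m:ℝ)+1)) (by positivity)
    exact ⟨K, hK1, hK2⟩
  choose Km hKnorm hKbad using hbad
  have hx : ∀ m : ℕ, ∃ x : EucSp n,
      dist x (centroid (A (Km m)).toSet) < 1/((m:ℝ)+1) ∧ x ∉ (A (Km m)).toSet := by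
    intro m
    obtain ⟨x, hx1, hx2⟩ := Set.not_subset.1 (hKbad m)
    exact ⟨x, Metric.mem_ball.1 hx1, hx2⟩
  choose xs hxs1 hxs2 using hx
  obtain ⟨φ, L, hφ, hLnorm, hconv⟩ := exists_subseq_tendsto hKnorm
  have hAconv : Tendsto (fun j => A (Km (φ j))) atTop (𝓝 (A L)) := by
    have := (hA.1.tendsto L).comp hconv
    exact this
  have hgconv : Tendsto (fun j => centroid (A (Km (φ j))).toSet) atTop
      (𝓝 (centroid (A L).toSet)) := Kn.tendsto_centroid hAconv
  set ginf := centroid (A L).toSet with hginf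
  obtain ⟨δ, hδ0, hδball⟩ := Metric.isOpen_iff.1 isOpen_interior ginf
    ((A L).centroid_mem_interior)
  have hδballK : Metric.ball ginf δ ⊆ (A L).toSet :=
    hδball.trans interior_subset
  -- the sequence xs (φ j) converges to ginf
  have hdx : Tendsto (fun j => dist (xs (φ j)) ginf) atTop (𝓝 0) := by
    have h1 : Tendsto (fun j => 1/((φ j : ℝ)+1)) atTop (𝓝 0) :=
      tendsto_one_div_add_atTop_nhds_zero_nat.comp hφ.tendsto_atTop
    have h2 : Tendsto (fun j => dist (centroid (A (Km (φ j))).toSet) ginf) atTop (𝓝 0) :=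
      tendsto_iff_dist_tendsto_zero.1 hgconv
    have hb : ∀ j, dist (xs (φ j)) ginf ≤
        1/((φ j : ℝ)+1) + dist (centroid (A (Km (φ j))).toSet) ginf := by
      intro j
      calc dist (xs (φ j)) ginf
          ≤ dist (xs (φ j)) (centroid (A (Km (φ j))).toSet) +
            dist (centroid (A (Km (φ j))).toSet) ginf := dist_triangle _ _ _
        _ ≤ _ := add_le_add_left (hxs1 (φ j)).le _
    have hsum : Tendsto (fun j => 1/((φ j : ℝ)+1) +
        dist (centroid (A (Km (φ j))).toSet) ginf) atTop (𝓝 0) := by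
      simpa using h1.add h2
    exact squeeze_zero (fun _ => dist_nonneg) hb hsum
  have hev1 : ∀ᶠ j in atTop,
      Metric.hausdorffDist (A (Km (φ j))).toSet (A L).toSet < δ/8 :=
    (Kn.tendsto_hausdorffDist hAconv).eventually (gt_mem_nhds (by linarith))
  have hev2 : ∀ᶠ j in atTop, dist (xs (φ j)) ginf < δ/4 :=
    hdx.eventually (gt_mem_nhds (by linarith))
  obtain ⟨j, hj1, hj2⟩ := (hev1.and hev2).exists
  have hball : Metric.ball ginf (δ - 2*(δ/8)) ⊆ (A (Km (φ j))).toSet := by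
    refine ball_subset_of_hausdorffDist_le (A (Km (φ j))).convex
      (A (Km (φ j))).isClosed (A (Km (φ j))).nonempty (by linarith) hδballK ?_ ?_
    · rw [EMetric.hausdorffEdist, hausdorffEDist_comm]
      exact Kn.hausdorffEdist_ne_top _ _
    · rw [Metric.hausdorffDist_comm]
      exact hj1.le
  exact hxs2 (φ j) (hball (by rw [Metric.mem_ball]; linarith))

lemma image_sub_centroid_affImage (T : EucSp n ≃ᵃ[ℝ] EucSp n) (K : Kn n) :
    (fun x => x - centroid (affImage T K).toSet) '' (affImage T K).toSet =
      ⇑T.linear '' ((fun x => x - centroid K.toSet) '' K.toSet) := by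
  rw [centroid_affImage, affImage_toSet, Set.image_image, Set.image_image]
  apply Set.image_congr
  intro y _
  have := T.toAffineMap.linearMap_vsub y (centroid K.toSet)
  simpa [vsub_eq_sub] using this.symm

end AuxDev8
/-- For every affine invariant set mapping `A` there is `c > 0` such that
`c (K − g(K)) ⊆ A(K) − g(A(K))` for every `K ∈ 𝒦ₙ`. -/
theorem statement8 (n : ℕ) (A : Kn n → Kn n) (hA : IsAffineInvariantSetMap A) :
    ∃ c : ℝ, 0 < c ∧ ∀ K : Kn n,
      c • ((fun x => x - centroid K.toSet) '' K.toSet) ⊆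
        (fun x => x - centroid (A K).toSet) '' (A K).toSet := by
  obtain ⟨r, hr, hrball⟩ := exists_uniform_radius A hA
  set c : ℝ := r / (2 * Real.sqrt n + 1) with hc
  have hden : 0 < 2 * Real.sqrt n + 1 := by positivity
  have hc0 : 0 < c := by positivity
  have hnormcase : ∀ K : Kn n, IsNormalized K →
      c • ((fun x => x - centroid K.toSet) '' K.toSet) ⊆
        (fun x => x - centroid (A K).toSet) '' (A K).toSet := by
    intro K hK z hz
    obtain ⟨w, hw, rfl⟩ := Set.mem_smul_set.1 hz
    obtain ⟨x, hxK, rfl⟩ := hw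
    set g := centroid K.toSet with hg
    have hgK : g ∈ K.toSet := K.centroid_mem
    have hxb : ‖x‖ ≤ Real.sqrt n := norm_le_of_mem_cubeSet (hK.2 hxK)
    have hgb : ‖g‖ ≤ Real.sqrt n := norm_le_of_mem_cubeSet (hK.2 hgK)
    have hnorm : ‖c • (x - g)‖ < r := by
      rw [norm_smul, Real.norm_eq_abs, abs_of_pos hc0]
      have h1 : ‖x - g‖ ≤ 2 * Real.sqrt n := by
        calc ‖x - g‖ ≤ ‖x‖ + ‖g‖ := norm_sub_le _ _
          _ ≤ 2 * Real.sqrt n := by linarith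
      calc c * ‖x - g‖ ≤ c * (2 * Real.sqrt n) := mul_le_mul_of_nonneg_left h1 hc0.le
        _ < c * (2 * Real.sqrt n + 1) := mul_lt_mul_of_pos_left (lt_add_one _) hc0
        _ = r := by rw [hc]; field_simp
    set g' := centroid (A K).toSet with hg'
    refine ⟨g' + c • (x - g), ?_, by simp⟩
    apply hrball K hK
    rw [Metric.mem_ball, dist_eq_norm]
    simpa [hg'] using hnorm
  refine ⟨c, hc0, fun K => ?_⟩
  obtain ⟨T, hTnorm⟩ := exists_affine_normalized K
  set K' := affImage T K with hK'
  set S := T.symm with hS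
  have hKeq : K = affImage S K' := (affImage_symm_affImage T K).symm
  have hAcomm : A K = affImage S (A K') := by
    rw [hKeq]
    exact hA.2 S K'
  have h1 : (fun x => x - centroid K.toSet) '' K.toSet =
      ⇑S.linear '' ((fun x => x - centroid K'.toSet) '' K'.toSet) := by
    conv_lhs => rw [hKeq]
    exact image_sub_centroid_affImage S K'
  have h2 : (fun x => x - centroid (A K).toSet) '' (A K).toSet =
      ⇑S.linear '' ((fun x => x - centroid (A K').toSet) '' (A K').toSet) := by
    rw [hAcomm]
    exact image_sub_centroid_affImage S (A K')
  rw [h1, h2]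
  rw [← Set.image_smul_comm _ _ _ (fun x => (map_smul S.linear c x))]
  exact Set.image_mono (hnormcase K' hTnorm)
end

section
/- Let A be an affine invariant set mapping on 𝒦ₙ. Then there exists d > 0 such that vol(A(K)) ≥ d·vol(K) for every K ∈ 𝒦ₙ. -/
open scoped Pointwise
open MeasureTheory

open scoped ENNReal

open Metric Set
open scoped ENNReal

lemma kn_dist {n : ℕ} (K L : Kn n) : dist K L = Metric.hausdorffDist K.toSet L.toSet := by
  show dist K.1 L.1 = _
  rw [← ConvexBody.hausdorffDist_coe]
  rfl

lemma kn_edist_ne_top {n : ℕ} (K L : Kn n) :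
    EMetric.hausdorffEdist K.toSet L.toSet ≠ ⊤ :=
  Metric.hausdorffEdist_ne_top_of_nonempty_of_bounded K.1.nonempty L.1.nonempty
    K.1.isCompact.isBounded L.1.isCompact.isBounded

lemma kn_vol_pos {n : ℕ} (K : Kn n) : 0 < volume K.toSet := by
  obtain ⟨x, hx⟩ := K.2
  calc (0:ℝ≥0∞) < volume (interior (K.1 : Set (EucSp n))) :=
        (isOpen_interior.measure_pos volume ⟨x, hx⟩)
    _ ≤ volume K.toSet := measure_mono interior_subset

lemma kn_vol_ne_top {n : ℕ} (K : Kn n) : volume K.toSet ≠ ⊤ :=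
  K.1.isCompact.measure_lt_top.ne

/-- If `L` is a closed convex set, `K` contains a ball of radius `r`, and every point of `K` is
within `ε ≤ r` of `L`, then the homothety of `K` with ratio `1 - ε/r` is inside `L`. -/
lemma shrink_subset {n : ℕ} {K L : Set (EuclideanSpace ℝ (Fin n))}
    (hLconv : Convex ℝ L) (hLcl : IsClosed L) (hLne : L.Nonempty)
    {x₀ : EuclideanSpace ℝ (Fin n)} {r ε : ℝ} (hr : 0 < r)
    (hball : closedBall x₀ r ⊆ K) (hε : 0 ≤ ε) (hεr : ε ≤ r)
    (hinf : ∀ x ∈ K, infDist x L ≤ ε) :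
    AffineMap.homothety x₀ (1 - ε / r) '' K ⊆ L := by
  rintro z ⟨w, hw, rfl⟩
  by_contra hz
  obtain ⟨f, u, hfu, huz⟩ := geometric_hahn_banach_closed_point hLconv hLcl hz
  -- every point of K has f-value at most u + ‖f‖ * ε
  have key1 : ∀ x ∈ K, f x ≤ u + ‖f‖ * ε := by
    intro x hx
    refine le_of_forall_pos_le_add fun δ hδ => ?_
    have h1 : infDist x L < ε + δ / (‖f‖ + 1) := by
      have : (0:ℝ) < δ / (‖f‖ + 1) := by positivity
      linarith [hinf x hx]
    obtain ⟨y, hyL, hxy⟩ := (Metric.infDist_lt_iff hLne).1 h1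
    have h2 : f x - f y ≤ ‖f‖ * (ε + δ / (‖f‖ + 1)) := by
      calc f x - f y = f (x - y) := by rw [map_sub]
        _ ≤ |f (x - y)| := le_abs_self _
        _ ≤ ‖f‖ * ‖x - y‖ := f.le_opNorm _
        _ ≤ ‖f‖ * (ε + δ / (‖f‖ + 1)) := by
            apply mul_le_mul_of_nonneg_left _ (norm_nonneg f)
            rw [← dist_eq_norm]
            exact hxy.le
    have h3 : ‖f‖ * (δ / (‖f‖ + 1)) ≤ δ := by
      rw [mul_div_assoc']
      apply div_le_of_le_mul₀ (by positivity) hδ.le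
      nlinarith [norm_nonneg f, hδ.le]
    nlinarith [hfu y hyL]
  -- hence `r * ‖f‖ ≤ u + ‖f‖ * ε - f x₀`
  set c : ℝ := (u + ‖f‖ * ε - f x₀) / r with hc
  have hx₀K : x₀ ∈ K := hball (mem_closedBall_self hr.le)
  have hc0 : 0 ≤ c := by
    apply div_nonneg _ hr.le
    have := key1 x₀ hx₀K
    linarith
  have hfnorm : ‖f‖ ≤ c := by
    refine f.opNorm_le_bound hc0 fun v => ?_
    rcases eq_or_ne v 0 with rfl | hv
    · simp
    have hvn : (0:ℝ) < ‖v‖ := norm_pos_iff.2 hv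
    have hmem : ∀ s : ℝ, |s| = 1 → x₀ + (s * (r / ‖v‖)) • v ∈ K := by
      intro s hs
      apply hball
      rw [mem_closedBall, dist_eq_norm]
      have h5 : x₀ + (s * (r / ‖v‖)) • v - x₀ = (s * (r / ‖v‖)) • v := add_sub_cancel_left x₀ _
      rw [h5, norm_smul, Real.norm_eq_abs, abs_mul, hs, one_mul,
        abs_of_nonneg (by positivity : (0:ℝ) ≤ r / ‖v‖), div_mul_cancel₀ r hvn.ne']
    have hval : ∀ s : ℝ, |s| = 1 → s * ((r / ‖v‖) * f v) ≤ c * r := by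
      intro s hs
      have := key1 _ (hmem s hs)
      rw [map_add, ContinuousLinearMap.map_smul] at this
      have hcr : c * r = u + ‖f‖ * ε - f x₀ := by
        rw [hc, div_mul_cancel₀]
        exact hr.ne'
      have h7 : (s * (r / ‖v‖)) * f v ≤ u + ‖f‖ * ε - f x₀ := by
        have h8 : f x₀ + s * (r / ‖v‖) * f v ≤ u + ‖f‖ * ε := by simpa [smul_eq_mul] using this
        linarith
      rw [hcr]
      nlinarith [h7]
    have h1 := hval 1 (by norm_num)
    have h2 := hval (-1) (by norm_num)
    have habs : (r / ‖v‖) * |f v| ≤ c * r := by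
      rcases abs_cases (f v) with ⟨h, _⟩ | ⟨h, _⟩
      · rw [h]; linarith
      · rw [h]; linarith
    -- conclude |f v| ≤ c * ‖v‖
    rw [div_mul_eq_mul_div] at habs
    rw [div_le_iff₀ hvn] at habs
    have := (mul_le_mul_iff_right₀ hr).1 (by linarith : r * |f v| ≤ r * (c * ‖v‖))
    calc ‖f v‖ = |f v| := rfl
      _ ≤ c * ‖v‖ := this
  -- now derive the contradiction
  set t : ℝ := ε / r with ht
  have ht0 : 0 ≤ t := by positivity
  have ht1 : t ≤ 1 := by rw [ht, div_le_one hr]; exact hεr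
  have hz' : f (AffineMap.homothety x₀ (1 - t) w) = f x₀ + (1 - t) * (f w - f x₀) := by
    rw [AffineMap.homothety_apply]
    simp only [vsub_eq_sub, vadd_eq_add, map_add, ContinuousLinearMap.map_smul, map_sub,
      smul_eq_mul]
    ring
  have hfw : f w - f x₀ ≤ c * r := by
    have := key1 w hw
    have hcr : c * r = u + ‖f‖ * ε - f x₀ := by
      rw [hc, div_mul_cancel₀]; exact hr.ne'
    linarith
  have hεf : ε * ‖f‖ ≤ t * (c * r) := by
    have h6 : t * (c * r) = ε * c := by rw [ht]; field_simp
    rw [h6]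
    exact mul_le_mul_of_nonneg_left hfnorm hε
  have : f (AffineMap.homothety x₀ (1 - t) w) ≤ u := by
    rw [hz']
    have h4 : (1 - t) * (f w - f x₀) ≤ (1 - t) * (c * r) := by
      apply mul_le_mul_of_nonneg_left hfw (by linarith)
    have hcru : f x₀ + c * r = u + ‖f‖ * ε := by
      have : c * r = u + ‖f‖ * ε - f x₀ := by rw [hc, div_mul_cancel₀]; exact hr.ne'
      linarith
    nlinarith [hεf]
  exact absurd huz (not_lt.2 this)

lemma kn_vol_lsc (n : ℕ) : LowerSemicontinuous (fun K : Kn n => (volume K.toSet).toReal) := by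
  intro K₀ c hc
  rcases lt_or_ge c 0 with hc0 | hc0
  · filter_upwards with K
    exact lt_of_lt_of_le hc0 ENNReal.toReal_nonneg
  set v₀ := (volume K₀.toSet).toReal with hv₀def
  have hv₀ : 0 < v₀ := lt_of_le_of_lt hc0 hc
  obtain ⟨x₀, hx₀⟩ := K₀.2
  obtain ⟨r, hr0, hball⟩ := Metric.isOpen_iff.1 isOpen_interior x₀ hx₀
  have hballK : closedBall x₀ (r/2) ⊆ K₀.toSet := by
    intro y hy
    have : y ∈ ball x₀ r := lt_of_le_of_lt (mem_closedBall.1 hy) (by linarith)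
    exact interior_subset (hball this)
  have hR : (0:ℝ) < r / 2 := by linarith
  have hcv : c / v₀ < 1 := (div_lt_one hv₀).2 hc
  set t : ℝ := min (1/2) ((1 - c / v₀) / (n + 1)) with htdef
  have htpos : 0 < t := lt_min (by norm_num) (div_pos (by linarith) (by positivity))
  have hthalf : t ≤ 1/2 := min_le_left _ _
  have hkey : c < (1 - t)^n * v₀ := by
    have hb : 1 + (n : ℝ) * (-t) ≤ (1 + (-t))^n := by
      apply one_add_mul_le_pow
      have : t ≤ 1 := by linarith
      linarith
    have hnt : (n : ℝ) * t < 1 - c / v₀ := by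
      have h1 : t ≤ (1 - c / v₀) / (n + 1) := min_le_right _ _
      have h2 : (n : ℝ) * t ≤ (n : ℝ) * ((1 - c / v₀) / (n + 1)) :=
        mul_le_mul_of_nonneg_left h1 (Nat.cast_nonneg n)
      have h3 : (n : ℝ) * ((1 - c / v₀) / (n + 1)) < 1 - c / v₀ := by
        rw [mul_div_assoc'] 
        rw [div_lt_iff₀ (by positivity : (0:ℝ) < (n:ℝ) + 1)]
        nlinarith [hcv]
      linarith
    have h4 : c / v₀ < (1 - t)^n := by
      have : 1 - (n : ℝ) * t ≤ (1 - t)^n := by simpa [sub_eq_add_neg] using hb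
      linarith
    calc c = (c / v₀) * v₀ := by field_simp
      _ < (1 - t)^n * v₀ := by exact mul_lt_mul_of_pos_right h4 hv₀
  filter_upwards [Metric.ball_mem_nhds K₀ (by positivity : (0:ℝ) < t * (r/2))] with K hK
  set ε := dist K K₀ with hεdef
  have hε0 : 0 ≤ ε := dist_nonneg
  have hεlt : ε < t * (r/2) := by simpa [hεdef] using hK
  have hεR : ε ≤ r/2 := by nlinarith
  have hinf : ∀ x ∈ K₀.toSet, infDist x K.toSet ≤ ε := by
    intro x hx
    have h5 := Metric.infDist_le_hausdorffDist_of_mem hx (kn_edist_ne_top K₀ K)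
    rwa [← kn_dist, dist_comm] at h5
  have hsub := shrink_subset K.1.convex K.1.isCompact.isClosed K.1.nonempty hR hballK hε0 hεR hinf
  set s : ℝ := 1 - ε / (r/2) with hsdef
  have hst : 1 - t ≤ s := by
    have : ε / (r/2) < t := (div_lt_iff₀ hR).2 (by linarith [hεlt])
    simp only [hsdef]
    linarith
  have ht1 : 0 ≤ 1 - t := by linarith
  have hvol : volume (AffineMap.homothety x₀ s '' K₀.toSet) =
      ENNReal.ofReal |s ^ n| * volume K₀.toSet := by
    rw [MeasureTheory.Measure.addHaar_image_homothety, finrank_euclideanSpace_fin]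
  have hle : ENNReal.ofReal |s ^ n| * volume K₀.toSet ≤ volume K.toSet := by
    rw [← hvol]
    exact measure_mono hsub
  have hfin := kn_vol_ne_top K
  have htor : |s ^ n| * v₀ ≤ (volume K.toSet).toReal := by
    have := ENNReal.toReal_mono hfin hle
    rwa [ENNReal.toReal_mul, ENNReal.toReal_ofReal (abs_nonneg _)] at this
  have hsn : (1 - t)^n ≤ |s ^ n| := by
    refine le_trans (pow_le_pow_left₀ ht1 hst n) (le_abs_self _)
  calc c < (1 - t)^n * v₀ := hkey
    _ ≤ |s ^ n| * v₀ := mul_le_mul_of_nonneg_right hsn hv₀.le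
    _ ≤ (volume K.toSet).toReal := htor

open TopologicalSpace

/-- A convex body as a nonempty compact set. -/
noncomputable def knToNC {n : ℕ} (K : Kn n) : NonemptyCompacts (EucSp n) :=
  ⟨⟨K.toSet, K.1.isCompact⟩, K.1.nonempty⟩

lemma knToNC_isometry {n : ℕ} : Isometry (knToNC (n := n)) := by
  apply Isometry.of_dist_eq
  intro K L
  rw [NonemptyCompacts.dist_eq, kn_dist]
  rfl

lemma nc_edist_ne_top {n : ℕ} (F G : NonemptyCompacts (EucSp n)) :
    EMetric.hausdorffEdist (F : Set (EucSp n)) (G : Set (EucSp n)) ≠ ⊤ :=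
  Metric.hausdorffEdist_ne_top_of_nonempty_of_bounded F.nonempty G.nonempty
    F.isCompact.isBounded G.isCompact.isBounded

lemma nc_mem_of_infDist {n : ℕ} (F : NonemptyCompacts (EucSp n)) (z : EucSp n)
    (h : ∀ δ : ℝ, 0 < δ → infDist z (F : Set (EucSp n)) ≤ δ) : z ∈ (F : Set (EucSp n)) := by
  have h0 : infDist z (F : Set (EucSp n)) ≤ 0 := by
    by_contra hpos
    push_neg at hpos
    linarith [h (infDist z (F : Set (EucSp n)) / 2) (by linarith)]
  exact (IsClosed.mem_iff_infDist_zero F.isCompact.isClosed F.nonempty).2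
    (le_antisymm h0 Metric.infDist_nonneg)

lemma isCompact_nc_inBall (n : ℕ) (R : ℝ) (hR : 0 ≤ R) :
    IsCompact {F : NonemptyCompacts (EucSp n) | (F : Set (EucSp n)) ⊆ closedBall 0 R} := by
  set B : Set (EucSp n) := closedBall 0 R with hB
  have hBc : IsCompact B := isCompact_closedBall 0 R
  haveI : CompactSpace B := isCompact_iff_compactSpace.1 hBc
  set φ : NonemptyCompacts B → NonemptyCompacts (EucSp n) := fun G =>
    ⟨⟨Subtype.val '' (G : Set B), G.isCompact.image continuous_subtype_val⟩,
      G.nonempty.image _⟩ with hφ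
  have hφcont : Continuous φ := by
    apply Isometry.continuous
    apply Isometry.of_dist_eq
    intro G G'
    rw [NonemptyCompacts.dist_eq, NonemptyCompacts.dist_eq]
    exact Metric.hausdorffDist_image isometry_subtype_coe
  have hrange : Set.range φ = {F : NonemptyCompacts (EucSp n) | (F : Set (EucSp n)) ⊆ B} := by
    ext F
    constructor
    · rintro ⟨G, rfl⟩
      rintro x ⟨y, _, rfl⟩
      exact y.2
    · intro hF
      have hcl : IsClosed ((fun x : B => (x : EucSp n)) ⁻¹' (F : Set (EucSp n))) :=
        F.isCompact.isClosed.preimage continuous_subtype_val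
      obtain ⟨x, hx⟩ := F.nonempty
      refine ⟨⟨⟨_, hcl.isCompact⟩, ⟨⟨x, hF hx⟩, hx⟩⟩, ?_⟩
      apply NonemptyCompacts.ext
      exact Set.image_preimage_eq_of_subset (by rwa [Subtype.range_coe])
  rw [← hrange]
  rw [← Set.image_univ]
  exact isCompact_univ.image hφcont

lemma isClosed_nc_convex_sup {n : ℕ} (Δ : Set (EucSp n)) :
    IsClosed {F : NonemptyCompacts (EucSp n) |
      Convex ℝ (F : Set (EucSp n)) ∧ Δ ⊆ (F : Set (EucSp n))} := by
  apply IsSeqClosed.isClosed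
  intro Fm F hmem hlim
  have hdist : ∀ δ : ℝ, 0 < δ → ∃ m, dist (Fm m) F < δ := by
    intro δ hδ
    have := (Metric.tendsto_atTop).1 hlim δ hδ
    obtain ⟨m, hm⟩ := this
    exact ⟨m, by simpa [dist_comm] using hm m le_rfl⟩
  constructor
  · -- convexity
    intro x hx y hy a b ha hb hab
    apply nc_mem_of_infDist
    intro δ hδ
    obtain ⟨m, hm⟩ := hdist (δ/2) (by linarith)
    have hne : EMetric.hausdorffEdist (F : Set (EucSp n)) ((Fm m : Set (EucSp n))) ≠ ⊤ :=
      nc_edist_ne_top F (Fm m)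
    have hxm : infDist x (Fm m : Set (EucSp n)) ≤ δ/2 := by
      have := Metric.infDist_le_hausdorffDist_of_mem hx hne
      calc infDist x (Fm m : Set (EucSp n)) ≤ Metric.hausdorffDist (F : Set (EucSp n)) (Fm m : Set (EucSp n)) := this
        _ = dist (Fm m) F := by rw [NonemptyCompacts.dist_eq, Metric.hausdorffDist_comm]
        _ ≤ δ/2 := hm.le
    have hym : infDist y (Fm m : Set (EucSp n)) ≤ δ/2 := by
      have := Metric.infDist_le_hausdorffDist_of_mem hy hne
      calc infDist y (Fm m : Set (EucSp n)) ≤ Metric.hausdorffDist (F : Set (EucSp n)) (Fm m : Set (EucSp n)) := this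
        _ = dist (Fm m) F := by rw [NonemptyCompacts.dist_eq, Metric.hausdorffDist_comm]
        _ ≤ δ/2 := hm.le
    obtain ⟨x', hx', hxd⟩ := (Fm m).isCompact.exists_infDist_eq_dist (Fm m).nonempty x
    obtain ⟨y', hy', hyd⟩ := (Fm m).isCompact.exists_infDist_eq_dist (Fm m).nonempty y
    have hz' : a • x' + b • y' ∈ (Fm m : Set (EucSp n)) := (hmem m).1 hx' hy' ha hb hab
    have hdz : dist (a • x + b • y) (a • x' + b • y') ≤ δ/2 := by
      rw [dist_eq_norm]
      have : a • x + b • y - (a • x' + b • y') = a • (x - x') + b • (y - y') := by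
        rw [smul_sub, smul_sub]; abel
      rw [this]
      calc ‖a • (x - x') + b • (y - y')‖ ≤ ‖a • (x - x')‖ + ‖b • (y - y')‖ := norm_add_le _ _
        _ = a * ‖x - x'‖ + b * ‖y - y'‖ := by
            rw [norm_smul, norm_smul, Real.norm_eq_abs, Real.norm_eq_abs, abs_of_nonneg ha,
              abs_of_nonneg hb]
        _ ≤ a * (δ/2) + b * (δ/2) := by
            apply add_le_add
            · apply mul_le_mul_of_nonneg_left _ ha
              rw [← dist_eq_norm, ← hxd]; exact hxm
            · apply mul_le_mul_of_nonneg_left _ hb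
              rw [← dist_eq_norm, ← hyd]; exact hym
        _ = δ/2 := by rw [← add_mul, hab, one_mul]
    have h1 : infDist (a • x + b • y) (F : Set (EucSp n)) ≤
        infDist (a • x' + b • y') (F : Set (EucSp n)) + dist (a • x + b • y) (a • x' + b • y') :=
      Metric.infDist_le_infDist_add_dist
    have h2 : infDist (a • x' + b • y') (F : Set (EucSp n)) ≤ δ/2 := by
      have := Metric.infDist_le_hausdorffDist_of_mem hz' (nc_edist_ne_top (Fm m) F)
      calc infDist (a • x' + b • y') (F : Set (EucSp n))
          ≤ Metric.hausdorffDist (Fm m : Set (EucSp n)) (F : Set (EucSp n)) := this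
        _ = dist (Fm m) F := by rw [NonemptyCompacts.dist_eq]
        _ ≤ δ/2 := hm.le
    linarith
  · -- contains Δ
    intro x hx
    apply nc_mem_of_infDist
    intro δ hδ
    obtain ⟨m, hm⟩ := hdist (δ/2) (by linarith)
    have hxF : x ∈ (Fm m : Set (EucSp n)) := (hmem m).2 hx
    have := Metric.infDist_le_hausdorffDist_of_mem hxF (nc_edist_ne_top (Fm m) F)
    calc infDist x (F : Set (EucSp n))
        ≤ Metric.hausdorffDist (Fm m : Set (EucSp n)) (F : Set (EucSp n)) := this
      _ = dist (Fm m) F := by rw [NonemptyCompacts.dist_eq]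
      _ ≤ δ/2 := hm.le
      _ ≤ δ := by linarith


noncomputable def stdb (n : ℕ) : Module.Basis (Fin n) ℝ (EucSp n) := PiLp.basisFun 2 ℝ (Fin n)

lemma stdb_apply (n : ℕ) (i j : Fin n) : stdb n i j = if j = i then 1 else 0 := by
  simp [stdb, PiLp.basisFun_apply, Pi.single_apply]

lemma stdb_repr (n : ℕ) (x : EucSp n) (i : Fin n) : (stdb n).repr x i = x i := by
  simp [stdb]

lemma lin_coord (n : ℕ) (ℓ : EucSp n →ₗ[ℝ] EucSp n) (v : EucSp n) (j : Fin n) :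
    ℓ v j = ∑ k : Fin n, v k * ℓ (stdb n k) j := by
  conv_lhs => rw [← (stdb n).sum_repr v]
  rw [map_sum]
  rw [WithLp.ofLp_sum, Finset.sum_apply]
  simp only [stdb_repr]
  congr 1
  ext k
  rw [_root_.map_smul]
  show v k * ℓ (stdb n k) j = _
  ring


/-- the matrix of difference vectors of a tuple of n+1 points -/
noncomputable def mat {n : ℕ} (x : Fin (n + 1) → EucSp n) : Matrix (Fin n) (Fin n) ℝ :=
  fun i j => (x i.succ - x 0) j

noncomputable def detD {n : ℕ} (x : Fin (n + 1) → EucSp n) : ℝ := (mat x).det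

lemma detD_lin {n : ℕ} (ℓ : EucSp n →ₗ[ℝ] EucSp n) (x : Fin (n + 1) → EucSp n) :
    detD (fun i => ℓ (x i)) = LinearMap.det ℓ * detD x := by
  have hA : LinearMap.det ℓ = Matrix.det (Matrix.transpose (Matrix.of (fun k j => ℓ (stdb n k) j))) := by
    rw [← LinearMap.det_toMatrix (stdb n) ℓ]
    congr 1
    ext i j
    rw [LinearMap.toMatrix_apply, stdb_repr]
    rfl
  have hM : mat (fun i => ℓ (x i)) = mat x * Matrix.of (fun k j => ℓ (stdb n k) j) := by
    ext i j
    rw [Matrix.mul_apply]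
    show (ℓ (x i.succ) - ℓ (x 0)) j = _
    rw [← map_sub, lin_coord]
    rfl
  rw [detD, hM, Matrix.det_mul, ← Matrix.det_transpose (Matrix.of fun k j => ℓ (stdb n k) j), ← hA,
    mul_comm]
  rfl

/-- the vertex tuple of the standard simplex -/
noncomputable def q (n : ℕ) : Fin (n + 1) → EucSp n := Fin.cases 0 (fun j => stdb n j)

lemma mat_q (n : ℕ) : mat (q n) = 1 := by
  ext i j
  simp only [mat, q, Fin.cases_succ, Fin.cases_zero, sub_zero, Matrix.one_apply]
  rw [stdb_apply]
  simp [eq_comm]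

lemma detD_q (n : ℕ) : detD (q n) = 1 := by rw [detD, mat_q]; exact Matrix.det_one

lemma det_updateRow_one {n : ℕ} (j : Fin n) (y : Fin n → ℝ) :
    ((1 : Matrix (Fin n) (Fin n) ℝ).updateRow j y).det = y j := by
  have hy : y = ∑ k, y k • (1 : Matrix (Fin n) (Fin n) ℝ) k := by
    funext l
    simp [Matrix.one_apply, Finset.sum_apply, Pi.smul_apply]
  calc ((1 : Matrix (Fin n) (Fin n) ℝ).updateRow j y).det
      = ((1 : Matrix (Fin n) (Fin n) ℝ).updateRow j (∑ k, y k • (1 : Matrix (Fin n) (Fin n) ℝ) k)).det := by rw [← hy]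
    _ = y j • (1 : Matrix (Fin n) (Fin n) ℝ).det := Matrix.det_updateRow_sum _ j y
    _ = y j := by simp

lemma mat_update {n : ℕ} (j : Fin n) (y : EucSp n) :
    mat (Function.update (q n) j.succ y) = (1 : Matrix (Fin n) (Fin n) ℝ).updateRow j (fun k => y k) := by
  have h0 : Function.update (q n) j.succ y 0 = 0 := by
    rw [Function.update_apply, if_neg (Ne.symm (Fin.succ_ne_zero j))]; rfl
  have hs : ∀ i : Fin n, Function.update (q n) j.succ y i.succ = if i = j then y else stdb n i := by
    intro i
    rw [Function.update_apply]
    by_cases h : i = j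
    · subst h; simp
    · rw [if_neg (by simpa [Fin.succ_inj] using h), if_neg h]; rfl
  ext i k
  rcases eq_or_ne i j with rfl | hij
  · simp [mat, h0, hs, Matrix.updateRow_apply]
  · simp only [mat, h0, hs, if_neg hij, Matrix.updateRow_apply, sub_zero]
    rw [stdb_apply, Matrix.one_apply]
    simp [eq_comm]


lemma detD_continuous (n : ℕ) : Continuous (fun x : Fin (n+1) → EucSp n => detD x) := by
  apply Continuous.matrix_det
  apply continuous_matrix
  intro i j
  have : (fun x : Fin (n+1) → EucSp n => mat x i j)
      = fun x => EuclideanSpace.proj j (x i.succ - x 0) := rfl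
  rw [this]
  exact (EuclideanSpace.proj j).continuous.comp ((continuous_apply i.succ).sub (continuous_apply 0))

lemma exists_max_tuple {n : ℕ} (K : Kn n) : ∃ x : Fin (n+1) → EucSp n,
    (∀ i, x i ∈ K.toSet) ∧ 0 < |detD x| ∧
      ∀ y : Fin (n+1) → EucSp n, (∀ i, y i ∈ K.toSet) → |detD y| ≤ |detD x| := by
  obtain ⟨x₀, hx₀⟩ := K.2
  obtain ⟨r, hr0, hball⟩ := Metric.isOpen_iff.1 isOpen_interior x₀ hx₀
  have hballK : ball x₀ r ⊆ K.toSet := fun y hy => interior_subset (hball hy)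
  set P : Set (Fin (n+1) → EucSp n) := Set.pi Set.univ (fun _ => K.toSet) with hP
  have hPc : IsCompact P := isCompact_univ_pi (fun _ => K.1.isCompact)
  have hPne : P.Nonempty := ⟨fun _ => x₀, fun i _ => hballK (mem_ball_self hr0)⟩
  obtain ⟨xs, hxsP, hmax⟩ := hPc.exists_isMaxOn hPne ((detD_continuous n).abs.continuousOn)
  refine ⟨xs, fun i => hxsP i (Set.mem_univ i), ?_, fun y hy => hmax (fun i _ => hy i)⟩
  -- positivity via a small simplex
  set x0 : Fin (n+1) → EucSp n :=
    Fin.cases x₀ (fun i => x₀ + (r/2) • EuclideanSpace.single i 1) with hx0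
  have hx0P : x0 ∈ P := by
    intro i _
    induction i using Fin.cases with
    | zero => exact hballK (mem_ball_self hr0)
    | succ i =>
      apply hballK
      rw [mem_ball, dist_eq_norm]
      have : x0 i.succ - x₀ = (r/2) • EuclideanSpace.single i 1 := by
        simp [hx0, Fin.cases_succ]
      rw [this, norm_smul, EuclideanSpace.norm_single]
      simp [Real.norm_eq_abs, abs_of_pos hr0]
      linarith
  have hmat : mat x0 = Matrix.diagonal (fun _ => r/2) := by
    ext i j
    have h1 : x0 i.succ - x0 0 = (r/2) • EuclideanSpace.single i 1 := by
      simp [hx0, Fin.cases_succ, Fin.cases_zero]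
    show (x0 i.succ - x0 0) j = _
    rw [h1]
    show (r/2) * (EuclideanSpace.single i (1:ℝ)) j = _
    rw [EuclideanSpace.single_apply, Matrix.diagonal_apply]
    by_cases h : i = j
    · subst h; simp
    · rw [if_neg (Ne.symm h), if_neg h, mul_zero]
  have hpos : 0 < |detD x0| := by
    rw [detD, hmat, Matrix.det_diagonal]
    rw [Finset.prod_const]
    rw [abs_pos]
    positivity
  exact lt_of_lt_of_le hpos (hmax hx0P)

lemma norm_le_of_cube {n : ℕ} {y : EucSp n} (h : ∀ j, |y j| ≤ 1) : ‖y‖ ≤ (n:ℝ) + 1 := by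
  rw [EuclideanSpace.norm_eq]
  have h1 : ∑ j : Fin n, ‖y j‖^2 ≤ (n:ℝ) := by
    calc ∑ j : Fin n, ‖y j‖^2 ≤ ∑ _j : Fin n, (1:ℝ) := by
          apply Finset.sum_le_sum
          intro j _
          have := h j
          rw [Real.norm_eq_abs]
          nlinarith [abs_nonneg (y j)]
      _ = (n:ℝ) := by simp
  calc Real.sqrt (∑ j : Fin n, ‖y j‖^2) ≤ Real.sqrt ((n:ℝ)) := Real.sqrt_le_sqrt h1
    _ ≤ (n:ℝ) + 1 := by
        rw [show (n:ℝ) + 1 = Real.sqrt (((n:ℝ)+1)^2) by rw [Real.sqrt_sq (by positivity)]]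
        apply Real.sqrt_le_sqrt
        nlinarith [Nat.cast_nonneg (α := ℝ) n]

/-- the standard simplex as a subset of ℝⁿ -/
noncomputable def simp0 (n : ℕ) : Set (EucSp n) := convexHull ℝ (Set.range (q n))

lemma interior_simp0_nonempty (n : ℕ) : (interior (simp0 n)).Nonempty := by
  unfold simp0
  rw [Convex.interior_nonempty_iff_affineSpan_eq_top (convex_convexHull ℝ _)]
  rw [affineSpan_convexHull]
  rw [AffineSubspace.affineSpan_eq_top_iff_vectorSpan_eq_top_of_nonempty ℝ (EucSp n) (EucSp n)
    (Set.range_nonempty _)]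
  refine top_unique ?_
  rw [← (stdb n).span_eq]
  apply Submodule.span_le.2
  rintro _ ⟨i, rfl⟩
  have : stdb n i = q n i.succ -ᵥ q n 0 := by
    simp [q, Fin.cases_succ, Fin.cases_zero, vsub_eq_sub]
  rw [this]
  exact vsub_mem_vectorSpan ℝ (Set.mem_range_self _) (Set.mem_range_self _)

lemma exists_T {n : ℕ} (K : Kn n) : ∃ T : EucSp n ≃ᵃ[ℝ] EucSp n,
    simp0 n ⊆ (affImage T K).toSet ∧
    (affImage T K).toSet ⊆ closedBall 0 ((n:ℝ)+1) := by
  obtain ⟨xs, hxsK, hpos, hmax⟩ := exists_max_tuple K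
  set v : Fin n → EucSp n := fun i => xs i.succ - xs 0 with hv
  have hdet : (mat xs).det ≠ 0 := by
    intro h
    rw [detD, h] at hpos
    simp at hpos
  have hdetv : (stdb n).det v ≠ 0 := by
    rw [Module.Basis.det_apply]
    have : (stdb n).toMatrix v = (mat xs).transpose := by
      ext i j
      rw [Module.Basis.toMatrix_apply, stdb_repr]
      rfl
    rw [this, Matrix.det_transpose]
    exact hdet
  obtain ⟨hli, hsp⟩ := (Module.Basis.is_basis_iff_det (stdb n)).2 (isUnit_iff_ne_zero.2 hdetv)
  set bv : Module.Basis (Fin n) ℝ (EucSp n) := Module.Basis.mk hli hsp.ge with hbv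
  set L : EucSp n ≃ₗ[ℝ] EucSp n := bv.equiv (stdb n) (Equiv.refl _) with hL
  have hLv : ∀ i, L (v i) = stdb n i := by
    intro i
    have h1 : v i = bv i := by rw [hbv, Module.Basis.mk_apply]
    rw [h1, hL, Module.Basis.equiv_apply, Equiv.refl_apply]
  set T : EucSp n ≃ᵃ[ℝ] EucSp n :=
    AffineEquiv.mk' (fun z => L (z - xs 0)) L (xs 0)
      (fun p' => by simp [vsub_eq_sub, vadd_eq_add]) with hT
  have hTz : ∀ z, T z = L (z - xs 0) := fun z => rfl
  have hTq : ∀ i, T (xs i) = q n i := by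
    intro i
    induction i using Fin.cases with
    | zero => rw [hTz]; simp [q]
    | succ i => rw [hTz]; exact hLv i
  have himgK : (affImage T K).toSet = (T : EucSp n → EucSp n) '' K.toSet := rfl
  -- determinant transformation
  have hdetT : ∀ y : Fin (n+1) → EucSp n,
      detD (fun i => T (y i)) = LinearMap.det (L : EucSp n →ₗ[ℝ] EucSp n) * detD y := by
    intro y
    have h1 : (fun i => T (y i)) = fun i => (L : EucSp n →ₗ[ℝ] EucSp n) (y i - xs 0) := by
      funext i
      rw [hTz]
      rfl
    have h2 : detD (fun i => (L : EucSp n →ₗ[ℝ] EucSp n) (y i - xs 0))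
        = detD (fun i => (L : EucSp n →ₗ[ℝ] EucSp n) (y i)) := by
      unfold detD mat
      congr 1
      ext i j
      rw [show (L : EucSp n →ₗ[ℝ] EucSp n) (y i.succ - xs 0)
          - (L : EucSp n →ₗ[ℝ] EucSp n) (y 0 - xs 0)
          = (L : EucSp n →ₗ[ℝ] EucSp n) (y i.succ) - (L : EucSp n →ₗ[ℝ] EucSp n) (y 0) by
        rw [← map_sub, ← map_sub, sub_sub_sub_cancel_right]]
    rw [h1, h2, detD_lin]
  -- the tuple q is maximal over the image
  have himax : ∀ u : Fin (n+1) → EucSp n, (∀ i, u i ∈ (affImage T K).toSet) →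
      |detD u| ≤ 1 := by
    intro u hu
    set w : Fin (n+1) → EucSp n := fun i => T.symm (u i) with hw
    have hwK : ∀ i, w i ∈ K.toSet := by
      intro i
      obtain ⟨z, hz, hzu⟩ := (himgK ▸ hu i : u i ∈ (T : EucSp n → EucSp n) '' K.toSet)
      have : w i = z := by
        show T.symm (u i) = z
        rw [← hzu]
        exact T.symm_apply_apply z
      rwa [this]
    have hTw : (fun i => T (w i)) = u := by
      funext i
      exact T.apply_symm_apply (u i)
    have h3 : detD u = LinearMap.det (L : EucSp n →ₗ[ℝ] EucSp n) * detD w := by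
      rw [← hTw, hdetT]
    have h4 : detD (q n) = LinearMap.det (L : EucSp n →ₗ[ℝ] EucSp n) * detD xs := by
      have : (fun i => T (xs i)) = q n := funext hTq
      rw [← this, hdetT]
    have h5 : |detD u| = |LinearMap.det (L : EucSp n →ₗ[ℝ] EucSp n)| * |detD w| := by
      rw [h3, abs_mul]
    have h6 : (1:ℝ) = |LinearMap.det (L : EucSp n →ₗ[ℝ] EucSp n)| * |detD xs| := by
      have := detD_q n
      rw [← abs_one, ← this, h4, abs_mul]
    rw [h5, h6]
    exact mul_le_mul_of_nonneg_left (hmax w hwK) (abs_nonneg _)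
  refine ⟨T, ?_, ?_⟩
  · -- simplex inside
    apply convexHull_min _ (affImage T K).1.convex
    rintro _ ⟨i, rfl⟩
    show q n i ∈ (affImage T K).toSet
    rw [himgK, ← hTq i]
    exact Set.mem_image_of_mem _ (hxsK i)
  · -- cube bound
    intro y hy
    rw [mem_closedBall, dist_zero_right]
    apply norm_le_of_cube
    intro j
    have hqmem : ∀ i, q n i ∈ (affImage T K).toSet := by
      intro i
      rw [himgK, ← hTq i]
      exact Set.mem_image_of_mem _ (hxsK i)
    have humem : ∀ i, Function.update (q n) j.succ y i ∈ (affImage T K).toSet := by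
      intro i
      rcases eq_or_ne i j.succ with rfl | hne
      · rw [Function.update_self]; exact hy
      · rw [Function.update_of_ne hne]; exact hqmem i
    have := himax _ humem
    rwa [detD, mat_update, det_updateRow_one] at this


open TopologicalSpace in
lemma isCompact_S (n : ℕ) :
    IsCompact {K : Kn n | simp0 n ⊆ K.toSet ∧ K.toSet ⊆ closedBall 0 ((n:ℝ)+1)} := by
  rw [knToNC_isometry.isUniformEmbedding.isEmbedding.isCompact_iff]
  have himg : knToNC '' {K : Kn n | simp0 n ⊆ K.toSet ∧ K.toSet ⊆ closedBall 0 ((n:ℝ)+1)}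
      = {F : NonemptyCompacts (EucSp n) | (F : Set (EucSp n)) ⊆ closedBall 0 ((n:ℝ)+1)}
        ∩ {F : NonemptyCompacts (EucSp n) |
            Convex ℝ (F : Set (EucSp n)) ∧ simp0 n ⊆ (F : Set (EucSp n))} := by
    ext F
    constructor
    · rintro ⟨K, ⟨hΔ, hB⟩, rfl⟩
      exact ⟨hB, K.1.convex, hΔ⟩
    · rintro ⟨hB, hconv, hΔ⟩
      refine ⟨⟨⟨(F : Set (EucSp n)), hconv, F.isCompact, F.nonempty⟩, ?_⟩, ⟨hΔ, hB⟩, ?_⟩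
      · exact (interior_simp0_nonempty n).mono (interior_mono hΔ)
      · exact NonemptyCompacts.ext rfl
  rw [himg]
  exact (isCompact_nc_inBall n _ (by positivity)).inter_right (isClosed_nc_convex_sup _)

lemma lsc_pos_min {X : Type*} [MetricSpace X] {S : Set X} (hS : IsCompact S)
    {f : X → ℝ} (hf : LowerSemicontinuous f) (hpos : ∀ x ∈ S, 0 < f x) :
    ∃ ε : ℝ, 0 < ε ∧ ∀ x ∈ S, ε ≤ f x := by
  rcases S.eq_empty_or_nonempty with rfl | hne
  · exact ⟨1, one_pos, by simp⟩
  have hopen : ∀ x ∈ S, IsOpen {y | f x / 2 < f y} := by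
    intro x _
    exact lowerSemicontinuous_iff_isOpen_preimage.1 hf (f x / 2)
  have hcov : S ⊆ ⋃ x ∈ S, {y | f x / 2 < f y} := by
    intro x hx
    exact Set.mem_biUnion hx (by simpa using half_lt_self (hpos x hx))
  obtain ⟨t, htS, htfin, hcov'⟩ := hS.elim_finite_subcover_image hopen hcov
  have htne : t.Nonempty := by
    rcases hne with ⟨x, hx⟩
    rcases Set.mem_iUnion₂.1 (hcov' hx) with ⟨y, hy, _⟩
    exact ⟨y, hy⟩
  set tf := htfin.toFinset with htf
  have htfne : tf.Nonempty := by
    rwa [htf, Set.Finite.toFinset_nonempty]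
  refine ⟨tf.inf' htfne (fun x => f x / 2), ?_, ?_⟩
  · rcases Finset.exists_mem_eq_inf' htfne (fun x => f x / 2) with ⟨x, hxtf, hxeq⟩
    rw [hxeq]
    have hxS : x ∈ S := htS (htfin.mem_toFinset.1 hxtf)
    linarith [hpos x hxS]
  · intro x hx
    rcases Set.mem_iUnion₂.1 (hcov' hx) with ⟨y, hy, hfy⟩
    have h1 : tf.inf' htfne (fun x => f x / 2) ≤ f y / 2 :=
      Finset.inf'_le _ (htfin.mem_toFinset.2 hy)
    have h2 : f y / 2 < f x := hfy
    linarith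

lemma vol_image_affine {n : ℕ} (T : EucSp n ≃ᵃ[ℝ] EucSp n) (s : Set (EucSp n)) :
    volume ((T : EucSp n → EucSp n) '' s)
      = ENNReal.ofReal |LinearMap.det (T.linear : EucSp n →ₗ[ℝ] EucSp n)| * volume s := by
  have h2 : (T : EucSp n → EucSp n) '' s
      = (fun y => y + T 0) '' ((T.linear : EucSp n →ₗ[ℝ] EucSp n) '' s) := by
    rw [Set.image_image]
    apply Set.image_congr'
    intro x
    have h3 := T.map_vadd 0 x
    rw [vadd_eq_add, add_zero, vadd_eq_add] at h3
    exact h3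
  rw [h2, Set.image_add_right, measure_preimage_add_right,
    MeasureTheory.Measure.addHaar_image_linearMap]

theorem statement9' (n : ℕ) (A : Kn n → Kn n) (hA : IsAffineInvariantSetMap A) :
    ∃ d : ℝ, 0 < d ∧ ∀ K : Kn n,
      d * (volume K.toSet).toReal ≤ (volume (A K).toSet).toReal := by
  obtain ⟨hAcont, hAaff⟩ := hA
  set S : Set (Kn n) := {K | simp0 n ⊆ K.toSet ∧ K.toSet ⊆ closedBall 0 ((n:ℝ)+1)} with hSdef
  have hf : LowerSemicontinuous (fun K : Kn n => (volume (A K).toSet).toReal) :=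
    LowerSemicontinuous.comp (f := fun K : Kn n => (volume K.toSet).toReal) (kn_vol_lsc n) hAcont
  have hfpos : ∀ K ∈ S, 0 < (volume (A K).toSet).toReal := fun K _ =>
    ENNReal.toReal_pos (kn_vol_pos (A K)).ne' (kn_vol_ne_top (A K))
  obtain ⟨ε, hε0, hεS⟩ := lsc_pos_min (isCompact_S n) hf hfpos
  set M : ℝ := (volume (closedBall (0 : EucSp n) ((n:ℝ)+1))).toReal with hMdef
  have hM0 : 0 < M := by
    apply ENNReal.toReal_pos
    · exact (measure_closedBall_pos volume 0 (by positivity)).ne'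
    · exact (isCompact_closedBall _ _).measure_lt_top.ne
  refine ⟨ε / M, by positivity, ?_⟩
  intro K
  obtain ⟨T, hΔ, hB⟩ := exists_T K
  set l : ℝ := |LinearMap.det (T.linear : EucSp n →ₗ[ℝ] EucSp n)| with hldef
  have hl : 0 < l := by
    rw [hldef, abs_pos]
    exact T.linear.isUnit_det'.ne_zero
  set va := (volume K.toSet).toReal with hva
  set vb := (volume (A K).toSet).toReal with hvb
  have hva' : (volume (affImage T K).toSet).toReal = l * va := by
    show (volume ((T : EucSp n → EucSp n) '' K.toSet)).toReal = _
    rw [vol_image_affine, ENNReal.toReal_mul, ENNReal.toReal_ofReal (abs_nonneg _)]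
  have hvb' : (volume (A (affImage T K)).toSet).toReal = l * vb := by
    rw [hAaff T K]
    show (volume ((T : EucSp n → EucSp n) '' (A K).toSet)).toReal = _
    rw [vol_image_affine, ENNReal.toReal_mul, ENNReal.toReal_ofReal (abs_nonneg _)]
  have hKS : affImage T K ∈ S := ⟨hΔ, hB⟩
  have hεb : ε ≤ l * vb := by
    have := hεS _ hKS
    rwa [hvb'] at this
  have hvaM : l * va ≤ M := by
    rw [← hva', hMdef]
    exact ENNReal.toReal_mono (isCompact_closedBall _ _).measure_lt_top.ne (measure_mono hB)
  have hva0 : 0 ≤ va := ENNReal.toReal_nonneg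
  have hvb0 : 0 ≤ vb := ENNReal.toReal_nonneg
  rw [div_mul_eq_mul_div, div_le_iff₀ hM0]
  have h1 : ε * (l * va) ≤ (l * vb) * M :=
    mul_le_mul hεb hvaM (by positivity) (by positivity)
  have h2 : l * (ε * va) ≤ l * (vb * M) := by ring_nf; ring_nf at h1; linarith
  exact le_of_mul_le_mul_left h2 hl

/-- For every affine invariant set mapping `A` there is `d > 0` such that
`vol(A(K)) ≥ d · vol(K)` for every `K ∈ 𝒦ₙ`. -/
theorem statement9 (n : ℕ) (A : Kn n → Kn n) (hA : IsAffineInvariantSetMap A) :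
    ∃ d : ℝ, 0 < d ∧ ∀ K : Kn n,
      d * (volume K.toSet).toReal ≤ (volume (A K).toSet).toReal := by
  exact statement9' n A hA
end
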